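/- arXiv:2107.03171 — 6 statements merged into one kernel-verified Lean document; each statement's English description precedes it below -/
import Mathlib

section
/- There exists an absolute constant C > 0 such that the following holds for all s ≥ 2. Let g : {0,1}^s → {0,1} satisfy g(0^s) = 0 and g(x) = 1 for every x of Hamming weight exactly 1. Then there exist a positive integer ℓ ≤ C·log₂ s and a finitely supported probability distribution over ℓ-tuples (S_1, …, S_ℓ) of subsets of [s] such that for every a ∈ {0,1}^s, Pr[ OR_ℓ( g(a ∧ S_1), …, g(a ∧ S_ℓ) ) ≠ OR_s(a) ] ≤ 1/10, where a ∧ S denotes the input that agrees with a on the coordinates in S and is 0 on all coordinates outside S. -/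
open scoped Classical

noncomputable def evalBool {ι : Type} (a : ι → Bool) (P : MvPolynomial ι ℝ) : ℝ :=
  MvPolynomial.eval (fun i => if a i then (1:ℝ) else 0) P

def HasProbPoly {ι : Type} (f : (ι → Bool) → Bool) (ε : ℝ) (d : ℕ) : Prop :=
  ∃ (k : ℕ) (w : Fin k → ℝ) (P : Fin k → MvPolynomial ι ℝ),
    (∀ i, 0 ≤ w i) ∧ (∑ i, w i = 1) ∧ (∀ i, (P i).totalDegree ≤ d) ∧
    ∀ a : ι → Bool,
      ∑ i ∈ Finset.univ.filter
          (fun i => evalBool a (P i) ≠ (if f a then (1:ℝ) else 0)), w i ≤ ε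

noncomputable def pdeg {ι : Type} (ε : ℝ) (f : (ι → Bool) → Bool) : ℕ :=
  sInf {d | HasProbPoly f ε d}

def TrulyVariate {ι : Type} (f : (ι → Bool) → Bool) : Prop :=
  ∀ i : ι, ∃ a, f (Function.update a i (!(a i))) ≠ f a

def ORf (n : ℕ) : (Fin n → Bool) → Bool := fun a => decide (∃ i, a i = true)

noncomputable def sensitivity {n : ℕ} (f : (Fin n → Bool) → Bool) : ℕ :=
  Finset.univ.sup (fun a : Fin n → Bool =>
    (Finset.univ.filter (fun i : Fin n => f (Function.update a i (!(a i))) ≠ f a)).card)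

/-- `a ∧ S`: the input agreeing with `a` on `S` and `0` outside `S`. -/
def maskInput {s : ℕ} (a : Fin s → Bool) (S : Finset (Fin s)) : Fin s → Bool :=
  fun m => a m && decide (m ∈ S)

open Finset in
lemma interchange {ι κ : Type*} [Fintype ι] [Fintype κ] [DecidableEq ι] (d : ι → κ → ℝ) :
    ∑ f : ι → κ, ∏ i, d i (f i) = ∏ i, ∑ b, d i b :=
  (Fintype.prod_sum d).symm

lemma q_sum {s : ℕ} (p : ℝ) :
    ∑ f : Fin s → Bool, ∏ i, (if f i then p else 1 - p) = 1 := by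
  rw [interchange (fun (_ : Fin s) (b : Bool) => if b then p else 1 - p)]
  have h : (∑ b : Bool, if b then p else (1-p)) = 1 := by rw [Fintype.sum_bool]; simp
  simp [h]

lemma marginal {ι : Type*} [Fintype ι] [DecidableEq ι] (c : ι → Bool → ℝ)
    (hc : ∀ i, c i false + c i true = 1) (K : Finset ι) (v : ι → Bool) :
    ∑ f ∈ Finset.univ.filter (fun f : ι → Bool => ∀ i ∈ K, f i = v i), ∏ i, c i (f i)
      = ∏ i ∈ K, c i (v i) := by
  rw [Finset.sum_filter]
  have key : ∀ f : ι → Bool,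
      (if (∀ i ∈ K, f i = v i) then ∏ i, c i (f i) else 0)
        = ∏ i, (if i ∈ K ∧ f i ≠ v i then 0 else c i (f i)) := by
    intro f
    by_cases h : ∀ i ∈ K, f i = v i
    · rw [if_pos h]
      refine Finset.prod_congr rfl fun i _ => ?_
      exact (if_neg (fun ⟨hi, hne⟩ => hne (h i hi))).symm
    · rw [if_neg h]
      push_neg at h
      obtain ⟨i, hiK, hne⟩ := h
      exact (Finset.prod_eq_zero (Finset.mem_univ i) (by rw [if_pos ⟨hiK, hne⟩])).symm
  simp_rw [key]
  rw [interchange (fun i b => if i ∈ K ∧ b ≠ v i then 0 else c i b)]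
  have h2 : ∀ i, (∑ b : Bool, if i ∈ K ∧ b ≠ v i then 0 else c i b)
      = if i ∈ K then c i (v i) else 1 := by
    intro i
    rw [Fintype.sum_bool]
    by_cases hi : i ∈ K
    · cases hv : v i <;> simp [hi, hv]
    · simp only [hi, false_and, if_false]
      linarith [hc i]
  simp_rw [h2]
  rw [Finset.prod_ite_mem, Finset.univ_inter]

lemma single_success {s : ℕ} (a : Fin s → Bool)
    (w : ℕ) (hw : w = (Finset.univ.filter (fun i => a i = true)).card) (hw1 : 1 ≤ w)
    (p : ℝ) (hp0 : 0 < p) (hple : (w:ℝ) * p ≤ 1/2) (hpge : 1/4 ≤ (w:ℝ) * p) :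
    (1:ℝ)/8 ≤ ∑ f ∈ Finset.univ.filter
        (fun f : Fin s → Bool =>
          (Finset.univ.filter (fun i => (a i && f i) = true)).card = 1),
      ∏ i, (if f i then p else 1 - p) := by
  have hp1 : p ≤ 1/2 := by
    have : (1:ℝ) * p ≤ (w:ℝ) * p := by
      apply mul_le_mul_of_nonneg_right _ hp0.le
      exact_mod_cast hw1
    linarith
  set A := Finset.univ.filter (fun i => a i = true) with hA
  set c : Fin s → Bool → ℝ := fun _ b => if b then p else 1 - p with hcdef
  have hc : ∀ i : Fin s, c i false + c i true = 1 := by intro i; simp [hcdef]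
  set piece : Fin s → Finset (Fin s → Bool) := fun i₀ =>
    Finset.univ.filter (fun f : Fin s → Bool => ∀ i ∈ A, f i = decide (i = i₀)) with hpiecedef
  have hpiece : ∀ i₀ ∈ A, ∑ f ∈ piece i₀, ∏ i, c i (f i) = p * (1-p)^(w-1) := by
    intro i₀ hi₀
    have hm := marginal c hc A (fun i => decide (i = i₀))
    beta_reduce at hm
    have h1 : ∑ f ∈ piece i₀, ∏ i, c i (f i) = ∏ i ∈ A, c i (decide (i = i₀)) := by
      simp only [hpiecedef]
      convert hm using 2
      ext f
      simp
    rw [h1, ← Finset.mul_prod_erase A _ hi₀]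
    have h1 : c i₀ (decide (i₀ = i₀)) = p := by simp [hcdef]
    have h2 : ∀ i ∈ A.erase i₀, c i (decide (i = i₀)) = 1 - p := by
      intro i hi
      have : i ≠ i₀ := Finset.ne_of_mem_erase hi
      simp [hcdef, this]
    rw [h1, Finset.prod_congr rfl h2, Finset.prod_const,
      Finset.card_erase_of_mem hi₀, ← hw]
  have hdisj : ∀ i₀ ∈ A, ∀ i₁ ∈ A, i₀ ≠ i₁ → Disjoint (piece i₀) (piece i₁) := by
    intro i₀ h₀ i₁ h₁ hne
    rw [Finset.disjoint_left]
    intro f hf0 hf1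
    rw [hpiecedef] at hf0 hf1
    simp only [Finset.mem_filter, Finset.mem_univ, true_and] at hf0 hf1
    have e0 := hf0 i₀ h₀
    have e1 := hf1 i₀ h₀
    simp [hne] at e0 e1
    rw [e0] at e1
    exact absurd e1 (by simp)
  have hsub : A.biUnion piece ⊆ Finset.univ.filter
      (fun f : Fin s → Bool =>
        (Finset.univ.filter (fun i => (a i && f i) = true)).card = 1) := by
    intro f hf
    rw [Finset.mem_biUnion] at hf
    obtain ⟨i₀, hi₀, hfp⟩ := hf
    rw [hpiecedef] at hfp
    simp only [Finset.mem_filter, Finset.mem_univ, true_and] at hfp ⊢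
    have hfilter : Finset.univ.filter (fun i => (a i && f i) = true) = {i₀} := by
      ext i
      simp only [Finset.mem_filter, Finset.mem_univ, true_and, Finset.mem_singleton,
        Bool.and_eq_true]
      constructor
      · rintro ⟨hai, hfi⟩
        have : i ∈ A := by rw [hA]; simp [hai]
        have := hfp i this
        rw [this] at hfi
        exact of_decide_eq_true hfi
      · rintro rfl
        have ha0 : a i = true := by
          have := hi₀; rw [hA] at this
          simpa using this
        refine ⟨ha0, ?_⟩
        rw [hfp i hi₀]
        simp
    rw [hfilter]; rfl
  have hnonneg : ∀ f : Fin s → Bool, (0:ℝ) ≤ ∏ i, c i (f i) := by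
    intro f
    apply Finset.prod_nonneg
    intro i _
    rw [hcdef]
    dsimp only
    split <;> linarith
  have hUsum : ∑ f ∈ A.biUnion piece, ∏ i, c i (f i) = (w:ℝ) * (p * (1-p)^(w-1)) := by
    rw [Finset.sum_biUnion hdisj]
    rw [Finset.sum_congr rfl hpiece, Finset.sum_const, ← hw]
    simp [nsmul_eq_mul]
  have hle : ∑ f ∈ A.biUnion piece, ∏ i, c i (f i) ≤ ∑ f ∈ Finset.univ.filter
        (fun f : Fin s → Bool =>
          (Finset.univ.filter (fun i => (a i && f i) = true)).card = 1),
      ∏ i, c i (f i) :=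
    Finset.sum_le_sum_of_subset_of_nonneg hsub (fun f _ _ => hnonneg f)
  have hnum : (1:ℝ)/8 ≤ (w:ℝ) * (p * (1-p)^(w-1)) := by
    have hcast : ((w - 1 : ℕ) : ℝ) = (w:ℝ) - 1 := by
      have : (1:ℕ) ≤ w := hw1
      push_cast [this]; ring
    have hbern : 1 - ((w:ℝ) - 1) * p ≤ (1-p)^(w-1) := by
      have := one_add_mul_le_pow (a := -p) (by linarith) (w-1)
      rw [hcast] at this
      calc 1 - ((w:ℝ)-1) * p = 1 + ((w:ℝ)-1) * (-p) := by ring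
        _ ≤ (1 + (-p))^(w-1) := this
        _ = (1-p)^(w-1) := by ring_nf
    have hhalf : (1:ℝ)/2 ≤ (1-p)^(w-1) := by
      have : 1 - ((w:ℝ) - 1) * p = 1 - (w:ℝ)*p + p := by ring
      nlinarith
    calc (1:ℝ)/8 = (1/4) * (1/2) := by norm_num
      _ ≤ ((w:ℝ)*p) * ((1-p)^(w-1)) := by
          apply mul_le_mul hpge hhalf (by norm_num) (by linarith)
      _ = (w:ℝ) * (p * (1-p)^(w-1)) := by ring
  calc (1:ℝ)/8 ≤ ∑ f ∈ A.biUnion piece, ∏ i, c i (f i) := by rw [hUsum]; exact hnum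
    _ ≤ _ := hle


lemma mask_filter {s : ℕ} (a b : Fin s → Bool) :
    maskInput a (Finset.univ.filter (fun m => b m = true)) = fun m => a m && b m := by
  funext m; simp [maskInput]

theorem or_reduction :
    ∃ C : ℝ, 0 < C ∧ ∀ s : ℕ, 2 ≤ s →
      ∀ g : (Fin s → Bool) → Bool,
        g (fun _ => false) = false →
        (∀ x : Fin s → Bool,
          (Finset.univ.filter (fun i => x i = true)).card = 1 → g x = true) →
        ∃ ℓ : ℕ, 0 < ℓ ∧ (ℓ : ℝ) ≤ C * Real.logb 2 s ∧
          ∃ (k : ℕ) (w : Fin k → ℝ) (S : Fin k → Fin ℓ → Finset (Fin s)),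
            (∀ i, 0 ≤ w i) ∧ (∑ i, w i = 1) ∧
            ∀ a : Fin s → Bool,
              ∑ i ∈ Finset.univ.filter
                  (fun i => ORf ℓ (fun j => g (maskInput a (S i j))) ≠ ORf s a),
                w i ≤ 1/10 := by
  refine ⟨36, by norm_num, ?_⟩
  intro s hs g hg0 hg1
  have hs0 : 0 < s := by omega
  set T : ℕ := Nat.log 2 s + 1 with hT
  set L : ℕ := 18 * T with hLdef
  refine ⟨L, by omega, ?_, ?_⟩
  · -- length bound
    have h1 : (1:ℝ) ≤ Real.logb 2 s := by
      rw [show (1:ℝ) = Real.logb 2 2 by simp]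
      apply Real.logb_le_logb_of_le (by norm_num) (by norm_num)
      exact_mod_cast hs
    have h2 : ((Nat.log 2 s : ℕ) : ℝ) ≤ Real.logb 2 s := by
      have hpow : ((2:ℕ)^(Nat.log 2 s) : ℝ) ≤ (s:ℝ) := by
        exact_mod_cast Nat.pow_log_le_self 2 (by omega)
      calc ((Nat.log 2 s : ℕ):ℝ) = Real.logb 2 (((2:ℕ):ℝ)^(Nat.log 2 s)) := by
            rw [Real.logb_pow]; norm_num
        _ ≤ Real.logb 2 s := by
            apply Real.logb_le_logb_of_le (by norm_num) (by positivity)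
            push_cast at hpow ⊢
            exact hpow
    have : (L:ℝ) = 18 * ((Nat.log 2 s : ℕ):ℝ) + 18 := by
      rw [hLdef, hT]; push_cast; ring
    rw [this]; linarith
  · -- the construction
    set Ω := (Fin L → Fin s → Bool) with hΩ
    set p : Fin L → ℝ := fun j => (1/2:ℝ)^(j.val / 18 + 2) with hpdef
    have hp0 : ∀ j, 0 < p j := fun j => by positivity
    have hp4 : ∀ j, p j ≤ 1/4 := by
      intro j
      rw [hpdef]
      calc ((1:ℝ)/2)^(j.val/18 + 2) = (1/2)^(j.val/18) * (1/4) := by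
            rw [pow_add]; norm_num
        _ ≤ 1 * (1/4) := by
            apply mul_le_mul_of_nonneg_right _ (by norm_num)
            exact pow_le_one₀ (by norm_num) (by norm_num)
        _ = 1/4 := by norm_num
    set Q : Fin L → (Fin s → Bool) → ℝ :=
      fun j f => ∏ i, (if f i then p j else 1 - p j) with hQdef
    have hQnn : ∀ j f, 0 ≤ Q j f := by
      intro j f
      apply Finset.prod_nonneg
      intro i _
      have := hp0 j; have := hp4 j
      split <;> linarith
    have hQ1 : ∀ j, ∑ f : Fin s → Bool, Q j f = 1 := fun j => q_sum (p j)
    set W : Ω → ℝ := fun ω => ∏ j, Q j (ω j) with hWdef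
    have hWnn : ∀ ω, 0 ≤ W ω :=
      fun ω => Finset.prod_nonneg fun j _ => hQnn j (ω j)
    set e := (Fintype.equivFin Ω) with hedef
    refine ⟨Fintype.card Ω, fun i => W (e.symm i),
      fun i j => Finset.univ.filter (fun m => e.symm i j m = true), fun i => hWnn _, ?_, ?_⟩
    · show ∑ i : Fin (Fintype.card Ω), W (e.symm i) = 1
      rw [Equiv.sum_comp e.symm W]
      rw [hWdef]
      rw [interchange Q]
      rw [Finset.prod_congr rfl (fun j _ => hQ1 j)]
      exact Finset.prod_const_one
    · intro a
      by_cases hex : ∃ m, a m = true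
      · obtain ⟨m₀, hm₀⟩ := hex
        set A := Finset.univ.filter (fun i => a i = true) with hA
        set wA := A.card with hwA
        have hw1 : 1 ≤ wA := by
          rw [hwA]
          apply Finset.card_pos.mpr
          exact ⟨m₀, by simp [hA, hm₀]⟩
        have hws : wA ≤ s := by
          calc wA ≤ Finset.univ.card := Finset.card_filter_le _ _
            _ = s := by simp
        set t := Nat.log 2 wA with ht
        have htT : t < T := by
          rw [hT]
          have := Nat.log_mono_right (b := 2) hws
          omega
        set pt := ((1:ℝ)/2)^(t+2) with hptdef
        have e1 : (2:ℝ)^t * pt = 1/4 := by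
          rw [hptdef, pow_add, ← mul_assoc, ← mul_pow]
          norm_num
        have e2 : (2:ℝ)^(t+1) * pt = 1/2 := by
          have h21 : (2:ℝ)^(t+1) = 2^t * 2 := pow_succ 2 t
          rw [h21]
          nlinarith [e1]
        have hpt0 : 0 < pt := by rw [hptdef]; positivity
        have hpge : 1/4 ≤ (wA:ℝ) * pt := by
          have hcast : (2:ℝ)^t ≤ (wA:ℝ) := by
            have := Nat.pow_log_le_self 2 (show wA ≠ 0 by omega)
            exact_mod_cast this
          calc (1/4:ℝ) = (2:ℝ)^t * pt := e1.symm
            _ ≤ (wA:ℝ) * pt := mul_le_mul_of_nonneg_right hcast hpt0.le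
        have hple : (wA:ℝ) * pt ≤ 1/2 := by
          have hcast : (wA:ℝ) ≤ (2:ℝ)^(t+1) := by
            have := (Nat.lt_pow_succ_log_self (by norm_num : 1 < 2) wA).le
            exact_mod_cast this
          calc (wA:ℝ) * pt ≤ (2:ℝ)^(t+1) * pt := mul_le_mul_of_nonneg_right hcast hpt0.le
            _ = 1/2 := e2
        -- the event
        set Ev : (Fin s → Bool) → Prop := fun f =>
          (Finset.univ.filter (fun i => (a i && f i) = true)).card = 1 with hEvdef
        set J := Finset.univ.filter (fun j : Fin L => j.val / 18 = t) with hJdef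
        have hJ18 : 18 ≤ J.card := by
          have : ∀ i : Fin 18, (⟨18*t + i.val, by omega⟩ : Fin L) ∈ J := by
            intro i
            rw [hJdef]
            simp only [Finset.mem_filter, Finset.mem_univ, true_and]
            omega
          calc 18 = (Finset.univ : Finset (Fin 18)).card := by simp
            _ ≤ J.card := Finset.card_le_card_of_injOn
                (fun i => (⟨18*t + i.val, by omega⟩ : Fin L))
                (fun i _ => this i)
                (by intro i _ i' _ h; simp only [Fin.mk.injEq] at h; omega)
        have hpJ : ∀ j ∈ J, p j = pt := by
          intro j hj
          rw [hJdef] at hj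
          simp only [Finset.mem_filter, Finset.mem_univ, true_and] at hj
          simp only [hpdef, hptdef]
          rw [hj]
        -- per-coordinate failure bound
        have hfail : ∀ j ∈ J,
            ∑ f ∈ Finset.univ.filter (fun f => ¬ Ev f), Q j f ≤ 7/8 := by
          intro j hj
          have hsplit := Finset.sum_filter_add_sum_filter_not Finset.univ Ev (Q j)
          have hsucc : (1:ℝ)/8 ≤ ∑ f ∈ Finset.univ.filter Ev, Q j f := by
            have := single_success a wA hwA hw1 pt hpt0 hple hpge
            rw [hQdef]
            simp only [hpJ j hj]
            exact this
          have htot : ∑ f : Fin s → Bool, Q j f = 1 := hQ1 j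
          have : ∑ f ∈ Finset.univ.filter Ev, Q j f
              + ∑ f ∈ Finset.univ.filter (fun f => ¬ Ev f), Q j f = 1 := by
            rw [hsplit]; exact htot
          linarith
        have hfailnn : ∀ j, 0 ≤ ∑ f ∈ Finset.univ.filter (fun f => ¬ Ev f), Q j f :=
          fun j => Finset.sum_nonneg fun f _ => hQnn j f
        -- transport the sum to Ω
        have htrans : ∑ i ∈ Finset.univ.filter
              (fun i => ORf L (fun j => g (maskInput a
                (Finset.univ.filter (fun m => e.symm i j m = true)))) ≠ ORf s a),
              W (e.symm i)
            = ∑ ω ∈ Finset.univ.filter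
              (fun ω : Ω => ORf L (fun j => g (fun m => a m && ω j m)) ≠ ORf s a), W ω := by
          rw [Finset.sum_filter, Finset.sum_filter]
          rw [← Equiv.sum_comp e (fun i => if ORf L (fun j => g (maskInput a
                (Finset.univ.filter (fun m => e.symm i j m = true)))) ≠ ORf s a
              then W (e.symm i) else 0)]
          apply Finset.sum_congr rfl
          intro ω _
          simp only [Equiv.symm_apply_apply]
          congr 1
          · simp only [mask_filter]
        rw [htrans]
        -- bound by the all-fail event
        have hsub : Finset.univ.filter
              (fun ω : Ω => ORf L (fun j => g (fun m => a m && ω j m)) ≠ ORf s a)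
            ⊆ Finset.univ.filter (fun ω : Ω => ∀ j ∈ J, ¬ Ev (ω j)) := by
          intro ω hω
          simp only [Finset.mem_filter, Finset.mem_univ, true_and] at hω ⊢
          by_contra hcon
          push_neg at hcon
          obtain ⟨j, hjJ, hEvj⟩ := hcon
          apply hω
          have hORs : ORf s a = true := by
            rw [ORf, decide_eq_true_iff]
            exact ⟨m₀, hm₀⟩
          have hgj : g (fun m => a m && ω j m) = true := by
            apply hg1
            exact hEvj
          have hORL : ORf L (fun j' => g (fun m => a m && ω j' m)) = true := by
            rw [ORf, decide_eq_true_iff]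
            exact ⟨j, hgj⟩
          rw [hORL, hORs]
        have hmono := Finset.sum_le_sum_of_subset_of_nonneg hsub
          (fun ω _ _ => hWnn ω)
        refine le_trans hmono ?_
        -- factorize the all-fail probability
        set D : Fin L → (Fin s → Bool) → ℝ :=
          fun j f => if j ∈ J ∧ Ev f then 0 else Q j f with hDdef
        have hWD : ∀ ω : Ω, (if (∀ j ∈ J, ¬ Ev (ω j)) then W ω else 0)
            = ∏ j, D j (ω j) := by
          intro ω
          by_cases h : ∀ j ∈ J, ¬ Ev (ω j)
          · rw [if_pos h, hWdef]
            apply Finset.prod_congr rfl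
            intro j _
            simp only [hDdef]
            exact (if_neg (fun hx => h j hx.1 hx.2)).symm
          · rw [if_neg h]
            push_neg at h
            obtain ⟨j, hjJ, hEvj⟩ := h
            refine (Finset.prod_eq_zero (Finset.mem_univ j) ?_).symm
            simp only [hDdef]
            exact if_pos ⟨hjJ, hEvj⟩
        rw [Finset.sum_filter]
        simp_rw [hWD]
        rw [interchange D]
        have hDval : ∀ j : Fin L, (∑ f : Fin s → Bool, D j f)
            = if j ∈ J then ∑ f ∈ Finset.univ.filter (fun f => ¬ Ev f), Q j f else 1 := by
          intro j
          by_cases hj : j ∈ J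
          · rw [if_pos hj, Finset.sum_filter]
            apply Finset.sum_congr rfl
            intro f _
            simp only [hDdef]
            by_cases hEv : Ev f
            · simp [hEv, hj]
            · simp [hEv]
          · rw [if_neg hj]
            have hDQ : ∀ f : Fin s → Bool, D j f = Q j f := by
              intro f
              simp only [hDdef]
              exact if_neg (fun h => hj h.1)
            rw [Finset.sum_congr rfl (fun f _ => hDQ f)]
            exact hQ1 j
        rw [Finset.prod_congr rfl (fun j _ => hDval j)]
        rw [Finset.prod_ite_mem, Finset.univ_inter]
        calc ∏ j ∈ J, ∑ f ∈ Finset.univ.filter (fun f => ¬ Ev f), Q j f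
            ≤ ∏ j ∈ J, (7/8:ℝ) := by
              apply Finset.prod_le_prod (fun j _ => hfailnn j) hfail
          _ = (7/8:ℝ)^(J.card) := by rw [Finset.prod_const]
          _ ≤ (7/8:ℝ)^18 := by
              apply pow_le_pow_of_le_one (by norm_num) (by norm_num) hJ18
          _ ≤ 1/10 := by norm_num
      · -- a is all-false
        push_neg at hex
        have ha : ∀ m, a m = false := fun m => by
          cases h : a m
          · rfl
          · exact absurd h (hex m)
        have hempty : Finset.univ.filter
            (fun i => ORf L (fun j => g (maskInput a
              (Finset.univ.filter (fun m => e.symm i j m = true)))) ≠ ORf s a) = ∅ := by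
          apply Finset.filter_false_of_mem
          intro i _
          have hmask : ∀ X : Finset (Fin s), maskInput a X = (fun _ => false) := by
            intro X; funext m; simp [maskInput, ha m]
          simp [hmask, ORf, hg0, ha]
        rw [hempty, Finset.sum_empty]
        norm_num
end

section
/- There exists an absolute constant a > 0 such that the following holds. Let r ≥ 2 and t ≥ 2, and let g : {0,1}^r × {0,1}^t → {0,1} be such that for every j ∈ [t] there exists a^{(j)} ∈ {0,1}^r with either g(a^{(j)}, b) = b_j for all b ∈ {0,1}^t, or g(a^{(j)}, b) = 1 − b_j for all b ∈ {0,1}^t. Then pdeg(g) ≥ a · log₂ t / log₂ r. -/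
open scoped Classical

noncomputable def maj3 {ι : Type} (P Q R : MvPolynomial ι ℝ) : MvPolynomial ι ℝ :=
  P*Q + Q*R + R*P - 2*(P*Q*R)

lemma evalBool_maj3 {ι : Type} (a : ι → Bool) (P Q R : MvPolynomial ι ℝ) :
    evalBool a (maj3 P Q R) =
      evalBool a P * evalBool a Q + evalBool a Q * evalBool a R +
        evalBool a R * evalBool a P -
        2 * (evalBool a P * evalBool a Q * evalBool a R) := by
  simp [evalBool, maj3]

lemma totalDegree_maj3 {ι : Type} {P Q R : MvPolynomial ι ℝ} {d : ℕ}
    (hP : P.totalDegree ≤ d) (hQ : Q.totalDegree ≤ d) (hR : R.totalDegree ≤ d) :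
    (maj3 P Q R).totalDegree ≤ 3 * d := by
  have hPQ : (P*Q).totalDegree ≤ 3*d := by
    calc (P*Q).totalDegree ≤ P.totalDegree + Q.totalDegree := MvPolynomial.totalDegree_mul _ _
    _ ≤ 3*d := by omega
  have hQR : (Q*R).totalDegree ≤ 3*d := by
    calc (Q*R).totalDegree ≤ Q.totalDegree + R.totalDegree := MvPolynomial.totalDegree_mul _ _
    _ ≤ 3*d := by omega
  have hRP : (R*P).totalDegree ≤ 3*d := by
    calc (R*P).totalDegree ≤ R.totalDegree + P.totalDegree := MvPolynomial.totalDegree_mul _ _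
    _ ≤ 3*d := by omega
  have h3 : (P*Q*R).totalDegree ≤ 3*d := by
    calc (P*Q*R).totalDegree ≤ (P*Q).totalDegree + R.totalDegree :=
          MvPolynomial.totalDegree_mul _ _
    _ ≤ (P.totalDegree + Q.totalDegree) + R.totalDegree := by
          gcongr; exact MvPolynomial.totalDegree_mul _ _
    _ ≤ 3*d := by omega
  have hPQR : (2*(P*Q*R)).totalDegree ≤ 3*d := by
    have : (2:MvPolynomial ι ℝ)*(P*Q*R) = P*Q*R + P*Q*R := by ring
    rw [this]
    exact le_trans (MvPolynomial.totalDegree_add _ _) (by omega)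
  have h1 : (P*Q + Q*R).totalDegree ≤ 3*d := le_trans (MvPolynomial.totalDegree_add _ _) (by omega)
  have h2 : (P*Q + Q*R + R*P).totalDegree ≤ 3*d :=
    le_trans (MvPolynomial.totalDegree_add _ _) (by omega)
  have hrw : (maj3 P Q R) = (P*Q + Q*R + R*P) + (-(2*(P*Q*R))) := by unfold maj3; ring
  rw [hrw]
  refine le_trans (MvPolynomial.totalDegree_add _ _) ?_
  rw [MvPolynomial.totalDegree_neg]
  omega

lemma sum_prod3 {k : ℕ} (A B C : Fin k → ℝ) :
    ∑ x : Fin k × Fin k × Fin k, A x.1 * B x.2.1 * C x.2.2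
      = (∑ i, A i) * (∑ i, B i) * (∑ i, C i) := by
  have hstep : ∀ i : Fin k, ∑ y : Fin k × Fin k, A i * B y.1 * C y.2
      = A i * ((∑ j, B j) * (∑ l, C l)) := by
    intro i
    rw [Finset.sum_mul_sum, Finset.mul_sum, Fintype.sum_prod_type]
    exact Finset.sum_congr rfl fun j _ => by
      rw [Finset.mul_sum]
      exact Finset.sum_congr rfl fun l _ => by ring
  rw [Fintype.sum_prod_type]
  calc ∑ i, ∑ y : Fin k × Fin k, A i * B y.1 * C y.2
      = ∑ i, A i * ((∑ j, B j) * (∑ l, C l)) := Finset.sum_congr rfl fun i _ => hstep i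
    _ = (∑ i, A i) * ((∑ j, B j) * (∑ l, C l)) := by rw [← Finset.sum_mul]
    _ = (∑ i, A i) * (∑ i, B i) * (∑ i, C i) := by ring

lemma hpp_amp {ι : Type} {f : (ι → Bool) → Bool} {ε : ℝ} {d : ℕ}
    (hε0 : 0 ≤ ε) (hε1 : ε ≤ 1) (h : HasProbPoly f ε d) :
    HasProbPoly f (ε^2*(3-2*ε)) (3*d) := by
  obtain ⟨k, w, P, hw0, hw1, hdeg, herr⟩ := h
  classical
  set K := Fintype.card (Fin k × Fin k × Fin k) with hK
  set e : Fin K ≃ (Fin k × Fin k × Fin k) := (Fintype.equivFin _).symm with he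
  refine ⟨K, fun i => w (e i).1 * w (e i).2.1 * w (e i).2.2,
    fun i => maj3 (P (e i).1) (P (e i).2.1) (P (e i).2.2), ?_, ?_, ?_, ?_⟩
  · intro i
    have := hw0 (e i).1; have := hw0 (e i).2.1; have := hw0 (e i).2.2; positivity
  · rw [Fintype.sum_equiv e (fun i => w (e i).1 * w (e i).2.1 * w (e i).2.2)
      (fun x => w x.1 * w x.2.1 * w x.2.2) (fun i => rfl)]
    rw [sum_prod3, hw1]; ring
  · intro i; exact totalDegree_maj3 (hdeg _) (hdeg _) (hdeg _)
  · intro a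
    set c : ℝ := if f a then 1 else 0 with hc
    have hc01 : c = 0 ∨ c = 1 := by by_cases hfa : f a <;> simp [hc, hfa]
    set χ : Fin k → ℝ := fun i => if evalBool a (P i) ≠ c then 1 else 0 with hχ
    set q : ℝ := ∑ i, w i * χ i with hq
    have hqB : q ≤ ε := by
      have hrw : q = ∑ i ∈ Finset.univ.filter (fun i => evalBool a (P i) ≠ c), w i := by
        rw [hq, Finset.sum_filter]
        exact Finset.sum_congr rfl (fun i _ => by by_cases hi : evalBool a (P i) ≠ c <;>
          simp [hχ, hi])
      rw [hrw]; exact herr a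
    have hq0 : 0 ≤ q := Finset.sum_nonneg (fun i _ => by
      have := hw0 i
      by_cases hi : evalBool a (P i) ≠ c <;> simp [hχ, hi] <;> positivity)
    have step1 : ∑ i ∈ Finset.univ.filter
          (fun i : Fin K => evalBool a (maj3 (P (e i).1) (P (e i).2.1) (P (e i).2.2)) ≠ c),
            (w (e i).1 * w (e i).2.1 * w (e i).2.2)
        ≤ ∑ x : Fin k × Fin k × Fin k, (w x.1 * w x.2.1 * w x.2.2) *
            (χ x.1 * χ x.2.1 + χ x.2.1 * χ x.2.2 + χ x.1 * χ x.2.2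
              - 2*(χ x.1 * χ x.2.1 * χ x.2.2)) := by
      rw [Finset.sum_filter]
      rw [Fintype.sum_equiv e
        (fun i : Fin K => if evalBool a (maj3 (P (e i).1) (P (e i).2.1) (P (e i).2.2)) ≠ c then
          w (e i).1 * w (e i).2.1 * w (e i).2.2 else 0)
        (fun x : Fin k × Fin k × Fin k =>
          if evalBool a (maj3 (P x.1) (P x.2.1) (P x.2.2)) ≠ c then
            w x.1 * w x.2.1 * w x.2.2 else 0) (fun i => rfl)]
      refine Finset.sum_le_sum (fun x _ => ?_)
      have hwa := hw0 x.1; have hwb := hw0 x.2.1; have hwc := hw0 x.2.2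
      by_cases h1 : evalBool a (P x.1) = c <;>
        by_cases h2 : evalBool a (P x.2.1) = c <;>
          by_cases h3 : evalBool a (P x.2.2) = c <;>
        simp only [hχ, h1, h2, h3, ne_eq, not_true_eq_false, not_false_eq_true,
          ite_true, ite_false, if_true, if_false]
      -- TTT
      · have hEV : evalBool a (maj3 (P x.1) (P x.2.1) (P x.2.2)) = c := by
          rw [evalBool_maj3, h1, h2, h3]; rcases hc01 with h|h <;> rw [h] <;> ring
        rw [if_neg (by simpa using hEV)]; nlinarith [mul_nonneg (mul_nonneg hwa hwb) hwc]
      -- TTF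
      · have hEV : evalBool a (maj3 (P x.1) (P x.2.1) (P x.2.2)) = c := by
          rw [evalBool_maj3, h1, h2]; rcases hc01 with h|h <;> rw [h] <;> ring
        rw [if_neg (by simpa using hEV)]; nlinarith [mul_nonneg (mul_nonneg hwa hwb) hwc]
      -- TFT
      · have hEV : evalBool a (maj3 (P x.1) (P x.2.1) (P x.2.2)) = c := by
          rw [evalBool_maj3, h1, h3]; rcases hc01 with h|h <;> rw [h] <;> ring
        rw [if_neg (by simpa using hEV)]; nlinarith [mul_nonneg (mul_nonneg hwa hwb) hwc]
      -- TFF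
      · split_ifs <;> nlinarith [mul_nonneg (mul_nonneg hwa hwb) hwc]
      -- FTT
      · have hEV : evalBool a (maj3 (P x.1) (P x.2.1) (P x.2.2)) = c := by
          rw [evalBool_maj3, h2, h3]; rcases hc01 with h|h <;> rw [h] <;> ring
        rw [if_neg (by simpa using hEV)]; nlinarith [mul_nonneg (mul_nonneg hwa hwb) hwc]
      -- FTF
      · split_ifs <;> nlinarith [mul_nonneg (mul_nonneg hwa hwb) hwc]
      -- FFT
      · split_ifs <;> nlinarith [mul_nonneg (mul_nonneg hwa hwb) hwc]
      -- FFF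
      · split_ifs <;> nlinarith [mul_nonneg (mul_nonneg hwa hwb) hwc]
    refine le_trans step1 ?_
    have expand : ∀ x : Fin k × Fin k × Fin k,
        (w x.1 * w x.2.1 * w x.2.2) *
            (χ x.1 * χ x.2.1 + χ x.2.1 * χ x.2.2 + χ x.1 * χ x.2.2
              - 2*(χ x.1 * χ x.2.1 * χ x.2.2))
        = (w x.1 * χ x.1) * (w x.2.1 * χ x.2.1) * (w x.2.2)
          + (w x.1) * (w x.2.1 * χ x.2.1) * (w x.2.2 * χ x.2.2)
          + (w x.1 * χ x.1) * (w x.2.1) * (w x.2.2 * χ x.2.2)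
          - 2*((w x.1 * χ x.1) * (w x.2.1 * χ x.2.1) * (w x.2.2 * χ x.2.2)) := by
      intro x; ring
    rw [Finset.sum_congr rfl (fun x _ => expand x)]
    rw [Finset.sum_sub_distrib, Finset.sum_add_distrib, Finset.sum_add_distrib,
      ← Finset.mul_sum]
    have e1 := sum_prod3 (fun i => w i * χ i) (fun i => w i * χ i) w
    have e2 := sum_prod3 w (fun i => w i * χ i) (fun i => w i * χ i)
    have e3 := sum_prod3 (fun i => w i * χ i) w (fun i => w i * χ i)
    have e4 := sum_prod3 (fun i => w i * χ i) (fun i => w i * χ i) (fun i => w i * χ i)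
    rw [e1, e2, e3, e4, hw1, ← hq]
    nlinarith [mul_nonneg hq0 hq0, mul_nonneg hε0 hε0,
      mul_nonneg (mul_nonneg hq0 hq0) hq0, sq_nonneg (ε - q),
      mul_nonneg (sub_nonneg.2 hqB) (sub_nonneg.2 hε1)]

lemma hpp_mono {ι : Type} {f : (ι → Bool) → Bool} {ε ε' : ℝ} {d d' : ℕ}
    (h : HasProbPoly f ε d) (he : ε ≤ ε') (hd : d ≤ d') : HasProbPoly f ε' d' := by
  obtain ⟨k, w, P, h0, h1, h2, h3⟩ := h
  exact ⟨k, w, P, h0, h1, fun i => le_trans (h2 i) hd, fun a => le_trans (h3 a) he⟩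

lemma hpp_exact {n : ℕ} (f : (Fin n → Bool) → Bool) {ε : ℝ} (hε : 0 ≤ ε) :
    HasProbPoly f ε n := by
  classical
  set Pf : MvPolynomial (Fin n) ℝ :=
    ∑ a ∈ Finset.univ.filter (fun a : Fin n → Bool => f a),
      ∏ i, (if a i then MvPolynomial.X i else 1 - MvPolynomial.X i) with hPf
  have hprodeval : ∀ (a b : Fin n → Bool),
      evalBool b (∏ i, (if a i then MvPolynomial.X i else (1:MvPolynomial (Fin n) ℝ) - MvPolynomial.X i))
        = if a = b then 1 else 0 := by
    intro a b
    rw [evalBool, map_prod]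
    by_cases hab : a = b
    · subst hab
      rw [if_pos rfl]
      refine Finset.prod_eq_one (fun i _ => ?_)
      by_cases hi : a i <;> simp [hi]
    · rw [if_neg hab]
      obtain ⟨i, hi⟩ : ∃ i, a i ≠ b i := Function.ne_iff.mp hab
      refine Finset.prod_eq_zero (Finset.mem_univ i) ?_
      by_cases h1 : a i <;> by_cases h2 : b i <;> simp_all
  have heval : ∀ b, evalBool b Pf = if f b then 1 else 0 := by
    intro b
    rw [hPf, evalBool, map_sum]
    have : ∀ a ∈ Finset.univ.filter (fun a : Fin n → Bool => f a),
        MvPolynomial.eval (fun i => if b i then (1:ℝ) else 0)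
          (∏ i, (if a i then MvPolynomial.X i else 1 - MvPolynomial.X i))
          = if a = b then 1 else 0 := fun a _ => hprodeval a b
    rw [Finset.sum_congr rfl this, Finset.sum_ite_eq' _ b (fun _ => (1:ℝ))]
    by_cases hb : f b <;> simp [hb]
  refine ⟨1, fun _ => 1, fun _ => Pf, fun _ => zero_le_one, by simp, fun _ => ?_, fun a => ?_⟩
  · rw [hPf]
    refine le_trans (MvPolynomial.totalDegree_finset_sum _ _) (Finset.sup_le fun a _ => ?_)
    refine le_trans (MvPolynomial.totalDegree_finset_prod _ _) ?_
    have hfac : ∀ i : Fin n,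
        (if a i then MvPolynomial.X i else (1:MvPolynomial (Fin n) ℝ) - MvPolynomial.X i).totalDegree ≤ 1 := by
      intro i
      by_cases hi : a i
      · simp [hi, MvPolynomial.totalDegree_X]
      · rw [if_neg hi]
        have : (1:MvPolynomial (Fin n) ℝ) - MvPolynomial.X i = 1 + (-(MvPolynomial.X i)) := by ring
        rw [this]
        refine le_trans (MvPolynomial.totalDegree_add _ _) ?_
        rw [MvPolynomial.totalDegree_neg, MvPolynomial.totalDegree_one, MvPolynomial.totalDegree_X]
        simp
    calc ∑ i, (if a i then MvPolynomial.X i else (1:MvPolynomial (Fin n) ℝ) - MvPolynomial.X i).totalDegree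
        ≤ ∑ _i : Fin n, 1 := Finset.sum_le_sum (fun i _ => hfac i)
      _ = n := by simp
  · have : Finset.univ.filter
        (fun i : Fin 1 => evalBool a ((fun _ => Pf) i) ≠ (if f a then (1:ℝ) else 0)) = ∅ := by
      refine Finset.filter_false_of_mem (fun i _ => ?_)
      rw [heval a]; simp
    rw [this]; simpa using hε

lemma bool_points_card {ι : Type} [Fintype ι] :
    ∀ (D : ℕ) (u : ι → ℝ) (G : Fin D → ι → ℝ) (S : Finset (ι → ℝ)),
    (∀ v ∈ S, ∀ i, v i = 0 ∨ v i = 1) →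
    (∀ v ∈ S, ∃ cc : Fin D → ℝ, v = fun i => u i + ∑ k, cc k * G k i) →
    S.card ≤ 2 ^ D := by
  intro D
  induction D with
  | zero =>
    intro u G S _ hmem
    simp only [pow_zero]
    rw [Finset.card_le_one]
    intro v hv v' hv'
    obtain ⟨c, hc⟩ := hmem v hv
    obtain ⟨c', hc'⟩ := hmem v' hv'
    rw [hc, hc']
    funext i; simp
  | succ D ih =>
    intro u G S hbool hmem
    by_cases hS : S.card ≤ 1
    · exact le_trans hS (Nat.one_le_two_pow)
    push_neg at hS
    obtain ⟨b, hb, b', hb', hbb⟩ := Finset.one_lt_card.mp hS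
    obtain ⟨i₀, hi₀⟩ : ∃ i, b i ≠ b' i := Function.ne_iff.mp hbb
    have hex : ∃ k, G k i₀ ≠ 0 := by
      by_contra hall
      push_neg at hall
      have hval : ∀ v ∈ S, v i₀ = u i₀ := by
        intro v hv
        obtain ⟨c, hc⟩ := hmem v hv
        rw [hc]
        simp only
        rw [Finset.sum_eq_zero (fun k _ => by rw [hall k, mul_zero])]
        ring
      exact hi₀ (by rw [hval b hb, hval b' hb'])
    obtain ⟨k₀, hk₀⟩ := hex
    have hsub : ∀ c : ℝ, (S.filter (fun v => v i₀ = c)).card ≤ 2 ^ D := by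
      intro c
      refine ih (fun i => u i - ((u i₀ - c)/(G k₀ i₀)) * G k₀ i)
        (fun j i => G (k₀.succAbove j) i - (G (k₀.succAbove j) i₀ / G k₀ i₀) * G k₀ i)
        _ (fun v hv => hbool v (Finset.mem_filter.mp hv).1) ?_
      intro v hv
      obtain ⟨hvS, hvc⟩ := Finset.mem_filter.mp hv
      obtain ⟨cc, hcc⟩ := hmem v hvS
      refine ⟨fun j => cc (k₀.succAbove j), ?_⟩
      funext i
      have hvi : v i = u i + ∑ k, cc k * G k i := by rw [hcc]
      have hvi₀ : v i₀ = u i₀ + ∑ k, cc k * G k i₀ := by rw [hcc]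
      rw [hvc] at hvi₀
      have h1 : ∑ k, cc k * G k i
          = cc k₀ * G k₀ i + ∑ j, cc (k₀.succAbove j) * G (k₀.succAbove j) i :=
        Fin.sum_univ_succAbove (fun k => cc k * G k i) k₀
      have h2 : ∑ k, cc k * G k i₀
          = cc k₀ * G k₀ i₀ + ∑ j, cc (k₀.succAbove j) * G (k₀.succAbove j) i₀ :=
        Fin.sum_univ_succAbove (fun k => cc k * G k i₀) k₀
      rw [h2] at hvi₀
      rw [hvi, h1]
      have hsum : ∑ j, cc (k₀.succAbove j) *
            (G (k₀.succAbove j) i - (G (k₀.succAbove j) i₀ / G k₀ i₀) * G k₀ i)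
          = (∑ j, cc (k₀.succAbove j) * G (k₀.succAbove j) i)
            - (∑ j, cc (k₀.succAbove j) * G (k₀.succAbove j) i₀) * (G k₀ i / G k₀ i₀) := by
        rw [Finset.sum_mul, ← Finset.sum_sub_distrib]
        refine Finset.sum_congr rfl (fun j _ => by field_simp)
      rw [hsum]
      have hB : ∑ j, cc (k₀.succAbove j) * G (k₀.succAbove j) i₀
          = c - u i₀ - cc k₀ * G k₀ i₀ := by linarith
      rw [hB]
      field_simp
      ring
    have hcover : S ⊆ (S.filter (fun v => v i₀ = 0)) ∪ (S.filter (fun v => v i₀ = 1)) := by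
      intro v hv
      rcases hbool v hv i₀ with h | h
      · exact Finset.mem_union_left _ (Finset.mem_filter.mpr ⟨hv, h⟩)
      · exact Finset.mem_union_right _ (Finset.mem_filter.mpr ⟨hv, h⟩)
    calc S.card ≤ ((S.filter (fun v => v i₀ = 0)) ∪ (S.filter (fun v => v i₀ = 1))).card :=
          Finset.card_le_card hcover
      _ ≤ (S.filter (fun v => v i₀ = 0)).card + (S.filter (fun v => v i₀ = 1)).card :=
          Finset.card_union_le _ _
      _ ≤ 2^D + 2^D := Nat.add_le_add (hsub 0) (hsub 1)
      _ = 2^(D+1) := by ring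

lemma sum_choose_le_pow (r D : ℕ) : ∑ k ∈ Finset.range (D+1), r.choose k ≤ (r+1)^D := by
  induction D with
  | zero => simp
  | succ D ih =>
    rw [Finset.sum_range_succ]
    have h1 : r.choose (D+1) ≤ r^(D+1) := Nat.choose_le_pow _ _
    have h2 : r^(D+1) ≤ r * (r+1)^D := by
      rw [pow_succ']
      exact Nat.mul_le_mul_left r (Nat.pow_le_pow_left (by omega) D)
    calc (∑ k ∈ Finset.range (D+1), r.choose k) + r.choose (D+1)
        ≤ (r+1)^D + r * (r+1)^D := Nat.add_le_add ih (le_trans h1 h2)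
      _ = (r+1)^(D+1) := by ring

lemma card_small_subsets_le (n D : ℕ) :
    ((Finset.univ : Finset (Finset (Fin n))).filter (fun S => S.card ≤ D)).card
      ≤ ∑ k ∈ Finset.range (D+1), n.choose k := by
  classical
  rw [Finset.card_eq_sum_card_fiberwise (f := Finset.card) (t := Finset.range (D+1))
    (fun S hS => by simp at hS; simp only [Finset.coe_range, Set.mem_Iio, Finset.mem_coe, Finset.mem_range]; omega)]
  refine Finset.sum_le_sum fun k _ => ?_
  calc ((Finset.univ.filter (fun S : Finset (Fin n) => S.card ≤ D)).filter
        (fun S => S.card = k)).card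
      ≤ (Finset.powersetCard k (Finset.univ : Finset (Fin n))).card := by
        refine Finset.card_le_card ?_
        intro S hS
        simp only [Finset.mem_filter] at hS
        rw [Finset.mem_powersetCard]
        exact ⟨Finset.subset_univ _, hS.2⟩
    _ = n.choose k := by rw [Finset.card_powersetCard, Finset.card_univ, Fintype.card_fin]

lemma sum_choose_real (t s : ℕ) :
    (∑ k ∈ Finset.range (s+1), (t.choose k : ℝ)) ≤ 16^s * (17/16)^t := by
  have hterm : ∀ k ∈ Finset.range (s+1), (t.choose k : ℝ)
      ≤ 16^s * ((t.choose k : ℝ) * (1/16)^k) := by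
    intro k hk
    simp only [Finset.mem_range] at hk
    have hkk : k ≤ s := by omega
    have h16 : (16:ℝ)^k ≤ 16^s := pow_le_pow_right₀ (by norm_num) hkk
    have hc : (0:ℝ) ≤ (t.choose k : ℝ) := Nat.cast_nonneg _
    have : (1:ℝ) ≤ 16^s * (1/16)^k := by
      rw [one_div, inv_pow, ← div_eq_mul_inv, le_div_iff₀ (by positivity)]
      simpa using h16
    nlinarith
  refine le_trans (Finset.sum_le_sum hterm) ?_
  rw [← Finset.mul_sum]
  have hmono : ∑ k ∈ Finset.range (s+1), (t.choose k : ℝ) * (1/16)^k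
      ≤ ∑ k ∈ Finset.range (t+1), (t.choose k : ℝ) * (1/16)^k := by
    rcases le_total (s+1) (t+1) with h | h
    · refine Finset.sum_le_sum_of_subset_of_nonneg (Finset.range_subset_range.mpr h) ?_
      intro k _ _; positivity
    · rw [Finset.sum_subset (Finset.range_subset_range.mpr h)]
      intro k hk hnk
      simp only [Finset.mem_range] at hk hnk
      have : t < k := by omega
      rw [Nat.choose_eq_zero_of_lt this]
      simp
  have hbin : ∑ k ∈ Finset.range (t+1), (t.choose k : ℝ) * (1/16)^k = (17/16)^t := by
    rw [show (17/16:ℝ) = 1/16 + 1 by norm_num, add_pow]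
    refine Finset.sum_congr rfl fun k _ => by rw [one_pow]; ring
  calc (16:ℝ)^s * ∑ k ∈ Finset.range (s+1), (t.choose k : ℝ) * (1/16)^k
      ≤ 16^s * ∑ k ∈ Finset.range (t+1), (t.choose k : ℝ) * (1/16)^k :=
        mul_le_mul_of_nonneg_left hmono (by positivity)
    _ = 16^s * (17/16)^t := by rw [hbin]

lemma eval_vector_rep {r t : ℕ} (Y : Fin t → Fin r → Bool) (bb : Fin t → Bool)
    (P : MvPolynomial (Fin (r+t)) ℝ) {D : ℕ} (hdeg : P.totalDegree ≤ D) :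
    (fun j : Fin t => evalBool (Fin.append (Y j) bb) P) ∈
      Submodule.span ℝ (Set.range (fun S : {S : Finset (Fin r) // S.card ≤ D} =>
        (fun j : Fin t => ∏ l ∈ S.1, (if Y j l then (1:ℝ) else 0)))) := by
  classical
  have hfun : (fun j : Fin t => evalBool (Fin.append (Y j) bb) P)
      = ∑ m ∈ P.support,
          (P.coeff m * ∏ l : Fin t, (if bb l then (1:ℝ) else 0) ^ (m (Fin.natAdd r l))) •
          (fun j : Fin t => ∏ l ∈ (Finset.univ.filter (fun l : Fin r => m (Fin.castAdd t l) ≠ 0)),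
            (if Y j l then (1:ℝ) else 0)) := by
    funext j
    rw [Finset.sum_apply]
    rw [evalBool, MvPolynomial.eval_eq']
    refine Finset.sum_congr rfl fun m _ => ?_
    have hsplit : ∏ v : Fin (r+t), (if Fin.append (Y j) bb v then (1:ℝ) else 0) ^ (m v)
        = (∏ l : Fin r, (if Y j l then (1:ℝ) else 0) ^ (m (Fin.castAdd t l)))
          * ∏ l : Fin t, (if bb l then (1:ℝ) else 0) ^ (m (Fin.natAdd r l)) := by
      rw [Fin.prod_univ_add (fun v => (if Fin.append (Y j) bb v then (1:ℝ) else 0) ^ (m v))]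
      congr 1
      · exact Finset.prod_congr rfl fun l _ => by rw [Fin.append_left]
      · exact Finset.prod_congr rfl fun l _ => by rw [Fin.append_right]
    have hfirst : ∏ l : Fin r, (if Y j l then (1:ℝ) else 0) ^ (m (Fin.castAdd t l))
        = ∏ l ∈ (Finset.univ.filter (fun l : Fin r => m (Fin.castAdd t l) ≠ 0)),
            (if Y j l then (1:ℝ) else 0) := by
      rw [← Finset.prod_filter_mul_prod_filter_not Finset.univ
        (fun l : Fin r => m (Fin.castAdd t l) ≠ 0)]
      have hone : ∏ l ∈ (Finset.univ.filter (fun l : Fin r => ¬ m (Fin.castAdd t l) ≠ 0)),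
          (if Y j l then (1:ℝ) else 0) ^ (m (Fin.castAdd t l)) = 1 := by
        refine Finset.prod_eq_one fun l hl => ?_
        simp only [Finset.mem_filter, not_not] at hl
        rw [hl.2, pow_zero]
      rw [hone, mul_one]
      refine Finset.prod_congr rfl fun l hl => ?_
      simp only [Finset.mem_filter] at hl
      by_cases hYl : Y j l
      · rw [if_pos hYl, one_pow]
      · rw [if_neg hYl, zero_pow hl.2]
    rw [hsplit, hfirst]
    simp only [Pi.smul_apply, smul_eq_mul]
    ring
  rw [hfun]
  refine Submodule.sum_mem _ fun m hm => Submodule.smul_mem _ _ (Submodule.subset_span ?_)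
  have hcard : (Finset.univ.filter (fun l : Fin r => m (Fin.castAdd t l) ≠ 0)).card ≤ D := by
    have h1 : (Finset.univ.filter (fun l : Fin r => m (Fin.castAdd t l) ≠ 0)).card
        ≤ ∑ l ∈ (Finset.univ.filter (fun l : Fin r => m (Fin.castAdd t l) ≠ 0)),
            m (Fin.castAdd t l) := by
      rw [Finset.card_eq_sum_ones]
      refine Finset.sum_le_sum fun l hl => ?_
      simp only [Finset.mem_filter] at hl
      omega
    have h2 : ∑ l ∈ (Finset.univ.filter (fun l : Fin r => m (Fin.castAdd t l) ≠ 0)),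
          m (Fin.castAdd t l) ≤ ∑ l : Fin r, m (Fin.castAdd t l) :=
      Finset.sum_le_sum_of_subset (Finset.filter_subset _ _)
    have h3 : ∑ l : Fin r, m (Fin.castAdd t l) ≤ ∑ v : Fin (r+t), m v := by
      calc ∑ l : Fin r, m (Fin.castAdd t l)
          ≤ (∑ l : Fin r, m (Fin.castAdd t l)) + ∑ l : Fin t, m (Fin.natAdd r l) :=
            Nat.le_add_right _ _
        _ = ∑ v : Fin (r+t), m v := (Fin.sum_univ_add (fun v => m v)).symm
    have h4 : ∑ v : Fin (r+t), m v ≤ P.totalDegree := by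
      have := MvPolynomial.le_totalDegree hm
      rwa [Finsupp.sum_fintype _ _ (fun _ => rfl)] at this
    omega
  exact ⟨⟨_, hcard⟩, rfl⟩

set_option maxHeartbeats 1000000 in
theorem pseudoaddressing_lower_bound :
    ∃ a : ℝ, 0 < a ∧ ∀ r t : ℕ, 2 ≤ r → 2 ≤ t →
      ∀ g : (Fin (r + t) → Bool) → Bool,
        (∀ j : Fin t, ∃ y : Fin r → Bool,
          (∀ b : Fin t → Bool, g (Fin.append y b) = b j) ∨
          (∀ b : Fin t → Bool, g (Fin.append y b) = !(b j))) →
        a * Real.logb 2 t / Real.logb 2 r ≤ (pdeg (1/3) g : ℝ) := by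
  classical
  refine ⟨1/810, by norm_num, ?_⟩
  intro r t hr ht g hg
  -- Skolemize the pseudoaddressing structure
  have hg' : ∀ j : Fin t, ∃ (y : Fin r → Bool) (fl : Bool),
      ∀ b : Fin t → Bool, g (Fin.append y b) = xor (b j) fl := by
    intro j
    obtain ⟨y, hy | hy⟩ := hg j
    · exact ⟨y, false, fun b => by rw [hy b]; simp⟩
    · exact ⟨y, true, fun b => by rw [hy b]; simp⟩
  choose Y FL hYFL using hg'
  set d := pdeg (1/3) g with hd
  have hmem : HasProbPoly g (1/3) d :=
    Nat.sInf_mem (⟨r+t, hpp_exact g (by norm_num)⟩ :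
      {D | HasProbPoly g (1/3) D}.Nonempty)
  -- amplify the error to 1/100 at the cost of degree 243*d
  have hA : HasProbPoly g (1/100) (243*d) := by
    have h1 := hpp_amp (by norm_num) (by norm_num) hmem
    have h1' : HasProbPoly g (26/100) (3*d) := hpp_mono h1 (by norm_num) le_rfl
    have h2 := hpp_amp (by norm_num) (by norm_num) h1'
    have h2' : HasProbPoly g (17/100) (9*d) := hpp_mono h2 (by norm_num) (by omega)
    have h3 := hpp_amp (by norm_num) (by norm_num) h2'
    have h3' : HasProbPoly g (8/100) (27*d) := hpp_mono h3 (by norm_num) (by omega)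
    have h4 := hpp_amp (by norm_num) (by norm_num) h3'
    have h4' : HasProbPoly g (19/1000) (81*d) := hpp_mono h4 (by norm_num) (by omega)
    have h5 := hpp_amp (by norm_num) (by norm_num) h4'
    exact hpp_mono h5 (by norm_num) (by omega)
  obtain ⟨k, w, P, hw0, hw1, hdeg, herr⟩ := hA
  -- setup
  set D₀ := 243*d with hD₀
  let bh : (Fin t → Bool) → (Fin t → Bool) := fun h j => xor (h j) (FL j)
  have hgval : ∀ (h : Fin t → Bool) (j : Fin t), g (Fin.append (Y j) (bh h)) = h j := by
    intro h j
    rw [hYFL j (bh h)]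
    have hbh : bh h j = (h j ^^ FL j) := rfl
    rw [hbh, Bool.xor_assoc, Bool.xor_self, Bool.xor_false]
  let badset : (Fin t → Bool) → Fin k → Finset (Fin t) := fun h i =>
    Finset.univ.filter (fun j =>
      evalBool (Fin.append (Y j) (bh h)) (P i) ≠ (if h j then (1:ℝ) else 0))
  -- for each h there is a polynomial wrong on at most t/100 coordinates
  have hbest : ∀ h : Fin t → Bool, ∃ i : Fin k, ((badset h i).card : ℝ) ≤ (t:ℝ) * (1/100) := by
    intro h
    have hswap : ∑ i, w i * ((badset h i).card : ℝ) ≤ (t:ℝ) * (1/100) := by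
      have hterm : ∀ i, w i * ((badset h i).card : ℝ)
          = ∑ j : Fin t, (if evalBool (Fin.append (Y j) (bh h)) (P i)
              ≠ (if h j then (1:ℝ) else 0) then w i else 0) := by
        intro i
        have hcard : ((badset h i).card : ℝ)
            = ∑ j : Fin t, (if evalBool (Fin.append (Y j) (bh h)) (P i)
                ≠ (if h j then (1:ℝ) else 0) then (1:ℝ) else 0) := by
          rw [Finset.sum_boole]
        rw [hcard, Finset.mul_sum]
        refine Finset.sum_congr rfl fun j _ => ?_
        by_cases hc : evalBool (Fin.append (Y j) (bh h)) (P i)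
            ≠ (if h j then (1:ℝ) else 0) <;> simp [hc]
      rw [Finset.sum_congr rfl (fun i _ => hterm i), Finset.sum_comm]
      have hj : ∀ j : Fin t, ∑ i, (if evalBool (Fin.append (Y j) (bh h)) (P i)
          ≠ (if h j then (1:ℝ) else 0) then w i else 0) ≤ 1/100 := by
        intro j
        rw [← Finset.sum_filter]
        have := herr (Fin.append (Y j) (bh h))
        rw [hgval h j] at this
        exact this
      calc ∑ j : Fin t, ∑ i, (if evalBool (Fin.append (Y j) (bh h)) (P i)
            ≠ (if h j then (1:ℝ) else 0) then w i else 0)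
          ≤ ∑ _j : Fin t, (1/100:ℝ) := Finset.sum_le_sum fun j _ => hj j
        _ = (t:ℝ) * (1/100) := by simp [mul_comm]
    by_contra hcon
    push_neg at hcon
    obtain ⟨i₀, hi₀⟩ : ∃ i, 0 < w i := by
      by_contra hz
      push_neg at hz
      have : ∑ i, w i = 0 :=
        le_antisymm (Finset.sum_nonpos (fun i _ => hz i)) (Finset.sum_nonneg (fun i _ => hw0 i))
      rw [hw1] at this; norm_num at this
    have hlt : ∑ i, w i * ((t:ℝ) * (1/100)) < ∑ i, w i * ((badset h i).card : ℝ) := by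
      refine Finset.sum_lt_sum (fun i _ => ?_) ⟨i₀, Finset.mem_univ i₀, ?_⟩
      · exact mul_le_mul_of_nonneg_left (le_of_lt (hcon i)) (hw0 i)
      · exact mul_lt_mul_of_pos_left (hcon i₀) hi₀
    rw [← Finset.sum_mul, hw1, one_mul] at hlt
    linarith
  choose I hI using hbest
  set s := t / 100 with hs
  let Efun : (Fin t → Bool) → Finset (Fin t) := fun h => badset h (I h)
  have hEcard : ∀ h, (Efun h).card ≤ s := by
    intro h
    rw [hs, Nat.le_div_iff_mul_le (by norm_num)]
    have := hI h
    have h100 : ((Efun h).card : ℝ) * 100 ≤ (t:ℝ) := by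
      have : ((badset h (I h)).card : ℝ) ≤ (t:ℝ) * (1/100) := this
      nlinarith
    exact_mod_cast h100
  set DIM := Fintype.card {S : Finset (Fin r) // S.card ≤ D₀} with hDIM
  set T : Finset (Finset (Fin t)) := Finset.univ.filter (fun E => E.card ≤ s) with hT
  -- fiber counting
  have hfib : ∀ E ∈ T, (Finset.univ.filter (fun h : Fin t → Bool => Efun h = E)).card
      ≤ 2^(DIM + E.card) := by
    intro E _
    have hcardκ : Fintype.card ({S : Finset (Fin r) // S.card ≤ D₀} ⊕ {j : Fin t // j ∈ E})
        = DIM + E.card := by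
      rw [Fintype.card_sum, Fintype.card_coe, hDIM]
    set N := DIM + E.card with hN
    obtain ⟨e⟩ : Nonempty (({S : Finset (Fin r) // S.card ≤ D₀} ⊕ {j : Fin t // j ∈ E}) ≃ Fin N) :=
      ⟨Fintype.equivFinOfCardEq hcardκ⟩
    let Gκ : ({S : Finset (Fin r) // S.card ≤ D₀} ⊕ {j : Fin t // j ∈ E}) → Fin t → ℝ := Sum.elim
      (fun S j => ∏ l ∈ S.1, (if Y j l then (1:ℝ) else 0))
      (fun j' j => if j = j'.1 then 1 else 0)
    let SB : Finset (Fin t → ℝ) :=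
      (Finset.univ.filter (fun h : Fin t → Bool => Efun h = E)).image
        (fun h => (fun j => if h j then (1:ℝ) else 0))
    have hinj : Function.Injective (fun h : Fin t → Bool => (fun j => if h j then (1:ℝ) else 0)) := by
      intro h h' heq
      funext j
      have := congrFun heq j
      by_cases h1 : h j <;> by_cases h2 : h' j <;> simp [h1, h2] at this ⊢
    have hSBcard : SB.card = (Finset.univ.filter (fun h : Fin t → Bool => Efun h = E)).card :=
      Finset.card_image_of_injective _ hinj
    rw [← hSBcard]
    refine bool_points_card N (fun _ => 0) (fun n => Gκ (e.symm n)) SB ?_ ?_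
    · intro v hv i
      obtain ⟨h, _, rfl⟩ := Finset.mem_image.mp hv
      by_cases hi : h i <;> simp [hi]
    · intro v hv
      obtain ⟨h, hhfib, rfl⟩ := Finset.mem_image.mp hv
      have hEh : Efun h = E := (Finset.mem_filter.mp hhfib).2
      set Vh : Fin t → ℝ := fun j => evalBool (Fin.append (Y j) (bh h)) (P (I h)) with hVh
      have hspan := eval_vector_rep Y (bh h) (P (I h)) (hdeg (I h))
      rw [Submodule.mem_span_range_iff_exists_fun] at hspan
      obtain ⟨cΓ, hcΓ⟩ := hspan
      set ccκ : ({S : Finset (Fin r) // S.card ≤ D₀} ⊕ {j : Fin t // j ∈ E}) → ℝ := Sum.elim cΓ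
        (fun j' => (if h j'.1 then (1:ℝ) else 0) - Vh j'.1) with hccκ
      refine ⟨fun n => ccκ (e.symm n), ?_⟩
      funext i
      have hsum1 : ∑ n : Fin N, ccκ (e.symm n) * Gκ (e.symm n) i
          = ∑ x : {S : Finset (Fin r) // S.card ≤ D₀} ⊕ {j : Fin t // j ∈ E}, ccκ x * Gκ x i :=
        Fintype.sum_equiv e.symm _ _ (fun n => rfl)
      have hsum2 : ∑ x : {S : Finset (Fin r) // S.card ≤ D₀} ⊕ {j : Fin t // j ∈ E}, ccκ x * Gκ x i
          = (∑ S : {S : Finset (Fin r) // S.card ≤ D₀}, cΓ S * (∏ l ∈ S.1, (if Y i l then (1:ℝ) else 0)))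
            + ∑ j' : {j : Fin t // j ∈ E},
                ((if h j'.1 then (1:ℝ) else 0) - Vh j'.1) * (if i = j'.1 then 1 else 0) := by
        rw [Fintype.sum_sum_type]
        rfl
      have hsum3 : (∑ S : {S : Finset (Fin r) // S.card ≤ D₀},
          cΓ S * (∏ l ∈ S.1, (if Y i l then (1:ℝ) else 0))) = Vh i := by
        have := congrFun hcΓ i
        rw [Finset.sum_apply] at this
        simpa using this
      have hsum4 : ∑ j' : {j : Fin t // j ∈ E},
          ((if h j'.1 then (1:ℝ) else 0) - Vh j'.1) * (if i = j'.1 then 1 else 0)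
          = if hiE : i ∈ E then ((if h i then (1:ℝ) else 0) - Vh i) else 0 := by
        by_cases hiE : i ∈ E
        · rw [dif_pos hiE]
          rw [Finset.sum_eq_single (⟨i, hiE⟩ : {j : Fin t // j ∈ E})]
          · simp
          · intro j' _ hne
            have : i ≠ j'.1 := fun hc => hne (Subtype.ext hc.symm)
            rw [if_neg this, mul_zero]
          · intro hcontra
            exact absurd (Finset.mem_univ _) hcontra
        · rw [dif_neg hiE]
          refine Finset.sum_eq_zero fun j' _ => ?_
          have : i ≠ j'.1 := fun hcontra => hiE (hcontra ▸ j'.2)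
          rw [if_neg this, mul_zero]
      rw [hsum1, hsum2, hsum3, hsum4]
      by_cases hiE : i ∈ E
      · rw [dif_pos hiE]; ring
      · rw [dif_neg hiE]
        -- i not in the bad set: polynomial value is exact
        have hnotbad : i ∉ badset h (I h) := by rw [← hEh] at hiE; exact hiE
        have : ¬ (evalBool (Fin.append (Y i) (bh h)) (P (I h)) ≠ (if h i then (1:ℝ) else 0)) := by
          intro hcontra
          exact hnotbad (Finset.mem_filter.mpr ⟨Finset.mem_univ _, hcontra⟩)
        push_neg at this
        have hVi : Vh i = (if h i then (1:ℝ) else 0) := this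
        simp [hVi]
  -- total count
  have hcount : (2:ℕ)^t ≤ T.card * 2^(DIM + s) := by
    have hcardfun : (Finset.univ : Finset (Fin t → Bool)).card = 2^t := by
      simp [Finset.card_univ]
    rw [← hcardfun]
    rw [Finset.card_eq_sum_card_fiberwise (f := Efun) (t := T)
      (fun h _ => Finset.mem_filter.mpr ⟨Finset.mem_univ _, hEcard h⟩)]
    calc ∑ E ∈ T, (Finset.univ.filter (fun h : Fin t → Bool => Efun h = E)).card
        ≤ ∑ E ∈ T, 2^(DIM + s) := by
          refine Finset.sum_le_sum fun E hE => ?_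
          refine le_trans (hfib E hE) (Nat.pow_le_pow_right (by norm_num) ?_)
          have := (Finset.mem_filter.mp hE).2
          omega
      _ = T.card * 2^(DIM + s) := by rw [Finset.sum_const, smul_eq_mul]
  -- real-number consequences
  have hTcard : (T.card : ℝ) ≤ 16^s * (17/16)^t := by
    have h1 : T.card ≤ ∑ j ∈ Finset.range (s+1), t.choose j := card_small_subsets_le t s
    calc (T.card : ℝ) ≤ (∑ j ∈ Finset.range (s+1), t.choose j : ℕ) := by exact_mod_cast h1
      _ = ∑ j ∈ Finset.range (s+1), (t.choose j : ℝ) := by push_cast; ring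
      _ ≤ 16^s * (17/16)^t := sum_choose_real t s
  have hmain : (2:ℝ)^t ≤ 16^s * (17/16)^t * 2^(DIM + s) := by
    have := hcount
    have hcast : ((2:ℕ)^t : ℝ) ≤ ((T.card * 2^(DIM + s) : ℕ) : ℝ) := by exact_mod_cast this
    push_cast at hcast
    calc (2:ℝ)^t ≤ (T.card : ℝ) * 2^(DIM+s) := hcast
      _ ≤ 16^s * (17/16)^t * 2^(DIM + s) := by
          have h2pos : (0:ℝ) < 2^(DIM+s) := by positivity
          nlinarith [hTcard, h2pos]
  -- take logarithms
  have hlog2 : (0:ℝ) < Real.log 2 := Real.log_pos (by norm_num)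
  have hDIMge : (4:ℝ)/5 * t ≤ (DIM:ℝ) := by
    have hstep := Real.log_le_log (by positivity) hmain
    rw [Real.log_pow, Real.log_mul (by positivity) (by positivity),
      Real.log_mul (by positivity) (by positivity), Real.log_pow, Real.log_pow,
      Real.log_pow] at hstep
    have h16 : Real.log 16 = 4 * Real.log 2 := by
      rw [show (16:ℝ) = 2^4 by norm_num, Real.log_pow]; push_cast; ring
    have h1716 : Real.log (17/16) ≤ (1/10) * Real.log 2 := by
      have := Real.log_le_sub_one_of_pos (show (0:ℝ) < 17/16 by norm_num)
      have hl2 : (0.6931471803:ℝ) < Real.log 2 := Real.log_two_gt_d9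
      nlinarith
    have hsle : (s:ℝ) ≤ (t:ℝ)/100 := by
      rw [hs]
      exact_mod_cast Nat.cast_div_le
    rw [h16] at hstep
    -- hstep : t * log 2 ≤ s*(4 log 2) + t * log(17/16) + (DIM+s) * log 2
    push_cast at hstep
    nlinarith [hstep, h1716, hsle, hlog2, (by positivity : (0:ℝ) ≤ (t:ℝ))]
  have hDIMle : (DIM:ℝ) ≤ ((r:ℝ)+1)^D₀ := by
    have h1 : DIM ≤ ∑ j ∈ Finset.range (D₀+1), r.choose j := by
      rw [hDIM, Fintype.card_subtype]
      exact card_small_subsets_le r D₀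
    have h2 : DIM ≤ (r+1)^D₀ := le_trans h1 (sum_choose_le_pow r D₀)
    exact_mod_cast h2
  have htle : (t:ℝ) ≤ (5/4) * ((r:ℝ)+1)^D₀ := by nlinarith [hDIMge, hDIMle]
  -- final log manipulation
  have hlogt : (0:ℝ) < Real.log t :=
    Real.log_pos (by exact_mod_cast (by omega : (1:ℕ) < t))
  have hlogr : (0:ℝ) < Real.log r :=
    Real.log_pos (by exact_mod_cast (by omega : (1:ℕ) < r))
  have hlogt2 : Real.log 2 ≤ Real.log t :=
    Real.log_le_log (by norm_num) (by exact_mod_cast ht)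
  have hkey : Real.log t ≤ 810 * d * Real.log r := by
    have hstep := Real.log_le_log (by positivity) htle
    rw [Real.log_mul (by norm_num) (by positivity), Real.log_pow] at hstep
    have h54 : Real.log (5/4) ≤ (2/5) * Real.log 2 := by
      have := Real.log_le_sub_one_of_pos (show (0:ℝ) < 5/4 by norm_num)
      have hl2 : (0.6931471803:ℝ) < Real.log 2 := Real.log_two_gt_d9
      nlinarith
    have hlogr1 : Real.log ((r:ℝ)+1) ≤ 2 * Real.log r := by
      have h1 : ((r:ℝ)+1) ≤ (r:ℝ)^2 := by
        have : (2:ℝ) ≤ (r:ℝ) := by exact_mod_cast hr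
        nlinarith
      calc Real.log ((r:ℝ)+1) ≤ Real.log ((r:ℝ)^2) := Real.log_le_log (by positivity) h1
        _ = 2 * Real.log r := by rw [Real.log_pow]; push_cast; ring
    -- hstep : log t ≤ log (5/4) + D₀ * log (r+1)
    have hD₀cast : ((D₀:ℕ):ℝ) = 243 * (d:ℝ) := by rw [hD₀]; push_cast; ring
    rw [hD₀cast] at hstep
    nlinarith [hstep, h54, hlogr1, hlogt2, (Nat.cast_nonneg d : (0:ℝ) ≤ (d:ℝ)), hlogr]
  -- convert to logb
  have hfinal : (1/810 : ℝ) * Real.logb 2 t / Real.logb 2 r = Real.log t / (810 * Real.log r) := by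
    rw [Real.logb, Real.logb]
    field_simp
  rw [hfinal, div_le_iff₀ (by nlinarith [hlogr] : (0:ℝ) < 810 * Real.log r)]
  calc Real.log t ≤ 810 * d * Real.log r := hkey
    _ = (d:ℝ) * (810 * Real.log r) := by ring
end

section
/- Let m ≥ 2, d ≥ 1 and M be positive integers with M > m^{10d}. Let X ⊆ {0,1}^m with |X| = M, and let 𝐅 be a finitely supported probability distribution over functions {0,1}^m → {0,1} such that for every function g : X → {0,1}, Pr_{F∼𝐅}[ F(x) = g(x) for all x ∈ X ] = 2^{−M} (equivalently, the values (F(x))_{x∈X} are independent uniform bits). Then Pr_{F∼𝐅}[ pdeg_{1/10}(F) ≤ d ] < 1/10. -/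
open scoped Classical

/-! ### Auxiliary lemmas -/

open Module

section Aux

lemma two_value_card_le {α : Type} [Fintype α] :
    ∀ (D : ℕ) (V : Submodule ℝ (α → ℝ)), finrank ℝ V ≤ D →
    ∀ Z : Finset (α → ℝ), (∀ v ∈ Z, v ∈ V) →
    (∀ x : α, ∃ a b : ℝ, ∀ v ∈ Z, v x = a ∨ v x = b) → Z.card ≤ 2 ^ D := by
  classical
  intro D
  induction D with
  | zero =>
    intro V hV Z hZV _
    have hVbot : V = ⊥ := by
      rw [← Submodule.finrank_eq_zero (R := ℝ)]
      omega
    have : Z ⊆ {0} := by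
      intro v hv
      have := hZV v hv
      rw [hVbot, Submodule.mem_bot] at this
      simp [this]
    simpa using Finset.card_le_card this
  | succ D ih =>
    intro V hV Z hZV h2
    by_cases hcard : Z.card ≤ 1
    · calc Z.card ≤ 1 := hcard
        _ ≤ 2 ^ (D+1) := Nat.one_le_two_pow
    · obtain ⟨u, hu, v, hv, huv⟩ := Finset.one_lt_card.mp (show 1 < Z.card by omega)
      obtain ⟨x, hx⟩ : ∃ x, u x ≠ v x := by
        by_contra h
        push_neg at h
        exact huv (funext h)
      set V' : Submodule ℝ (α → ℝ) := V ⊓ LinearMap.ker (LinearMap.proj x) with hV'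
      have hfin : finrank ℝ V' ≤ D := by
        have hlt : V' < V := by
          refine lt_of_le_of_ne inf_le_left ?_
          intro he
          have hmem : u - v ∈ V' := by
            rw [he]; exact Submodule.sub_mem V (hZV u hu) (hZV v hv)
          have := hmem.2
          change (u - v) x = 0 at this
          simp only [Pi.sub_apply] at this
          exact hx (sub_eq_zero.mp this)
        have := Submodule.finrank_lt_finrank_of_lt hlt
        omega
      obtain ⟨a, b, hab⟩ := h2 x
      have key : ∀ (c : ℝ) (W : Finset (α → ℝ)), W ⊆ Z → (∀ v ∈ W, v x = c) →
          W.card ≤ 2 ^ D := by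
        intro c W hWZ hWc
        rcases W.eq_empty_or_nonempty with he | ⟨w₀, hw₀⟩
        · simp [he]
        · have hinj : Set.InjOn (fun v => v - w₀) ↑W := fun p _ q _ h => by
            simpa using congrArg (· + w₀) h
          have : (W.image (fun v => v - w₀)).card = W.card := Finset.card_image_of_injOn hinj
          rw [← this]
          apply ih V' hfin
          · intro z hz
            obtain ⟨p, hp, rfl⟩ := Finset.mem_image.mp hz
            constructor
            · exact Submodule.sub_mem V (hZV p (hWZ hp)) (hZV w₀ (hWZ hw₀))
            · show (p - w₀) x = 0
              simp only [Pi.sub_apply]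
              rw [hWc p hp, hWc w₀ hw₀, sub_self]
          · intro y
            obtain ⟨ay, by', hy⟩ := h2 y
            refine ⟨ay - w₀ y, by' - w₀ y, ?_⟩
            intro z hz
            obtain ⟨p, hp, rfl⟩ := Finset.mem_image.mp hz
            rcases hy p (hWZ hp) with h | h <;> simp [Pi.sub_apply, h]
      have h0 : (Z.filter (fun v => v x = a)).card ≤ 2 ^ D :=
        key a _ (Finset.filter_subset _ _) (fun v hv => (Finset.mem_filter.mp hv).2)
      have h1 : (Z.filter (fun v => ¬ v x = a)).card ≤ 2 ^ D := by
        apply key b _ (Finset.filter_subset _ _)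
        intro v hv
        rcases Finset.mem_filter.mp hv with ⟨hvZ, hva⟩
        rcases hab v hvZ with h | h
        · exact absurd h hva
        · exact h
      have := Finset.card_filter_add_card_filter_not (s := Z) (p := fun v => v x = a)
      calc Z.card = _ + _ := this.symm
        _ ≤ 2 ^ D + 2 ^ D := Nat.add_le_add h0 h1
        _ = 2 ^ (D + 1) := by ring

lemma exists_exact_poly {m : ℕ} (f : (Fin m → Bool) → Bool) :
    ∃ P : MvPolynomial (Fin m) ℝ, ∀ a, evalBool a P = if f a then 1 else 0 := by
  classical
  refine ⟨∑ b : Fin m → Bool, (if f b then (1:ℝ) else 0) •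
      ∏ i, (if b i then MvPolynomial.X i else 1 - MvPolynomial.X i), ?_⟩
  intro a
  show MvPolynomial.eval _ _ = _
  rw [map_sum]
  have key : ∀ b : Fin m → Bool, MvPolynomial.eval (fun i => if a i then (1:ℝ) else 0)
      ((if f b then (1:ℝ) else 0) •
        ∏ i, (if b i then MvPolynomial.X i else 1 - MvPolynomial.X i))
      = if b = a then (if f b then 1 else 0) else 0 := by
    intro b
    rw [MvPolynomial.smul_eval, map_prod]
    have hfac : ∀ i, MvPolynomial.eval (fun i => if a i then (1:ℝ) else 0)
        (if b i then MvPolynomial.X i else 1 - MvPolynomial.X i)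
        = if b i = a i then 1 else 0 := by
      intro i
      cases hb : b i <;> cases ha : a i <;> simp [hb, ha]
    rw [Finset.prod_congr rfl (fun i _ => hfac i)]
    by_cases hba : b = a
    · subst hba
      simp
    · obtain ⟨i, hi⟩ : ∃ i, b i ≠ a i := by
        by_contra hne
        push_neg at hne
        exact hba (funext hne)
      rw [Finset.prod_eq_zero (Finset.mem_univ i) (by simp [hi]), if_neg hba, mul_zero]
  rw [Finset.sum_congr rfl (fun b _ => key b)]
  simp

lemma hasProbPoly_of_exact {m : ℕ} (f : (Fin m → Bool) → Bool) {ε : ℝ} (hε : 0 ≤ ε) :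
    ∃ d, HasProbPoly f ε d := by
  obtain ⟨P, hP⟩ := exists_exact_poly f
  refine ⟨P.totalDegree, 1, fun _ => 1, fun _ => P, fun _ => zero_le_one, by simp,
    fun _ => le_rfl, ?_⟩
  intro a
  have : Finset.univ.filter
      (fun i : Fin 1 => evalBool a P ≠ (if f a then (1:ℝ) else 0)) = ∅ := by
    apply Finset.filter_false_of_mem
    intro i _
    simp [hP a]
  rw [this]
  simpa using hε

lemma hasProbPoly_mono {m : ℕ} {f : (Fin m → Bool) → Bool} {ε : ℝ} {d d' : ℕ}
    (h : HasProbPoly f ε d) (hdd : d ≤ d') : HasProbPoly f ε d' := by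
  obtain ⟨k, w, P, h1, h2, h3, h4⟩ := h
  exact ⟨k, w, P, h1, h2, fun i => le_trans (h3 i) hdd, h4⟩

lemma hasProbPoly_of_pdeg_le {m : ℕ} {f : (Fin m → Bool) → Bool} {ε : ℝ} (hε : 0 ≤ ε)
    {d : ℕ} (h : pdeg ε f ≤ d) : HasProbPoly f ε d := by
  have hne : {d | HasProbPoly f ε d}.Nonempty := hasProbPoly_of_exact f hε
  exact hasProbPoly_mono (Nat.sInf_mem hne) h

noncomputable def optProd {m : ℕ} (d : ℕ) (c : Fin d → Option (Fin m)) :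
    MvPolynomial (Fin m) ℝ :=
  ∏ j, (c j).elim 1 MvPolynomial.X

lemma monomial_eq_optProd {m : ℕ} :
    ∀ (d : ℕ) (s : Fin m →₀ ℕ), (s.sum fun _ e => e) ≤ d →
    ∃ c : Fin d → Option (Fin m), optProd d c = MvPolynomial.monomial s 1 := by
  intro d
  induction d with
  | zero =>
    intro s hs
    have hs0 : s = 0 := by
      ext i
      by_contra hi
      have hmem : i ∈ s.support := Finsupp.mem_support_iff.mpr (by simpa using hi)
      have : 0 < s.sum fun _ e => e := by
        apply Finset.sum_pos'
        · intro j _; exact Nat.zero_le _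
        · exact ⟨i, hmem, Nat.pos_of_ne_zero (by simpa using hi)⟩
      omega
    subst hs0
    refine ⟨fun j => none, ?_⟩
    simp [optProd, MvPolynomial.monomial_zero']
  | succ d ih =>
    intro s hs
    by_cases hs0 : s = 0
    · subst hs0
      refine ⟨fun j => none, ?_⟩
      simp [optProd, MvPolynomial.monomial_zero']
    · obtain ⟨i, hi⟩ : ∃ i, s i ≠ 0 := by
        by_contra hne
        push_neg at hne
        exact hs0 (Finsupp.ext hne)
      set s' : Fin m →₀ ℕ := s - Finsupp.single i 1 with hs'
      have hadd : Finsupp.single i 1 + s' = s := by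
        ext j
        by_cases hj : j = i
        · subst hj
          simp [hs', Finsupp.single_apply]
          omega
        · simp [hs', Finsupp.single_apply, Ne.symm hj, hj]
      have hsum : (s'.sum fun _ e => e) ≤ d := by
        have h1 : ((Finsupp.single i 1 + s').sum fun _ e => e)
            = 1 + s'.sum fun _ e => e := by
          rw [Finsupp.sum_add_index (by simp) (by intros; rfl)]
          simp
        rw [hadd] at h1
        omega
      obtain ⟨c', hc'⟩ := ih s' hsum
      refine ⟨Fin.cons (some i) c', ?_⟩
      rw [optProd, Fin.prod_univ_succ]
      simp only [Fin.cons_zero, Fin.cons_succ]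
      have : (∏ j : Fin d, ((c' j).elim 1 MvPolynomial.X : MvPolynomial (Fin m) ℝ))
          = MvPolynomial.monomial s' 1 := hc'
      rw [this]
      show MvPolynomial.X i * _ = _
      rw [MvPolynomial.X, MvPolynomial.monomial_mul, hadd, one_mul]

noncomputable def phiL (m : ℕ) : MvPolynomial (Fin m) ℝ →ₗ[ℝ] ((Fin m → Bool) → ℝ) :=
  LinearMap.pi fun a =>
    { toFun := fun P => evalBool a P
      map_add' := fun P Q => by simp [evalBool]
      map_smul' := fun c P => by simp [evalBool, MvPolynomial.smul_eval] }

@[simp] lemma phiL_apply {m : ℕ} (P : MvPolynomial (Fin m) ℝ) (a : Fin m → Bool) :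
    phiL m P a = evalBool a P := rfl

noncomputable def Vspan (m d : ℕ) : Submodule ℝ ((Fin m → Bool) → ℝ) :=
  Submodule.span ℝ (Set.range fun c : Fin d → Option (Fin m) => phiL m (optProd d c))

lemma finrank_Vspan_le (m d : ℕ) : finrank ℝ (Vspan m d) ≤ (m + 1) ^ d := by
  classical
  have h := finrank_range_le_card (R := ℝ)
    (fun c : Fin d → Option (Fin m) => phiL m (optProd d c))
  rw [Set.finrank] at h
  refine le_trans h ?_
  rw [Fintype.card_fun]
  simp

lemma mem_Vspan {m d : ℕ} (P : MvPolynomial (Fin m) ℝ) (hP : P.totalDegree ≤ d) :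
    phiL m P ∈ Vspan m d := by
  classical
  have hsum : phiL m P = ∑ s ∈ P.support,
      phiL m ((MvPolynomial.monomial s) (MvPolynomial.coeff s P)) := by
    rw [← map_sum]
    exact congrArg _ P.as_sum
  rw [hsum]
  apply Submodule.sum_mem
  intro s hs
  have h1 : (MvPolynomial.monomial s) (MvPolynomial.coeff s P)
      = MvPolynomial.coeff s P • (MvPolynomial.monomial s) 1 := by
    rw [MvPolynomial.smul_monomial, smul_eq_mul, mul_one]
  rw [h1, map_smul]
  apply Submodule.smul_mem
  have hdeg : (s.sum fun _ e => e) ≤ d := le_trans (MvPolynomial.le_totalDegree hs) hP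
  obtain ⟨c, hc⟩ := monomial_eq_optProd d s hdeg
  rw [← hc]
  exact Submodule.subset_span (Set.mem_range_self c)

noncomputable def restrL {α : Type} (S : Finset α) : (α → ℝ) →ₗ[ℝ] (α → ℝ) where
  toFun v := fun x => if x ∈ S then v x else 0
  map_add' u v := by funext x; by_cases h : x ∈ S <;> simp [h]
  map_smul' c v := by funext x; by_cases h : x ∈ S <;> simp [h]

@[simp] lemma restrL_apply {α : Type} (S : Finset α) (v : α → ℝ) (x : α) :
    restrL S v x = if x ∈ S then v x else 0 := rfl

end Aux

theorem random_function_lower_bound (m d M : ℕ) (hm : 2 ≤ m) (hd : 1 ≤ d)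
    (hM : m ^ (10 * d) < M)
    (X : Finset (Fin m → Bool)) (hX : X.card = M)
    (k : ℕ) (w : Fin k → ℝ) (F : Fin k → ((Fin m → Bool) → Bool))
    (hw : ∀ i, 0 ≤ w i) (hw1 : ∑ i, w i = 1)
    (hunif : ∀ g : (Fin m → Bool) → Bool,
      ∑ i ∈ Finset.univ.filter (fun i => ∀ x ∈ X, F i x = g x), w i
        = ((2:ℝ) ^ M)⁻¹) :
    ∑ i ∈ Finset.univ.filter (fun i => pdeg (1/10) (F i) ≤ d), w i < 1/10 := by
  classical
  set t : ℕ := M / 10 with ht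
  set D : ℕ := (m + 1) ^ d with hD
  -- numeric facts
  have hM1025 : 1025 ≤ M := by
    have h2 : 2 ^ (10 * d) ≤ m ^ (10 * d) := Nat.pow_le_pow_left hm _
    have h3 : (2:ℕ) ^ 10 ≤ 2 ^ (10 * d) := Nat.pow_le_pow_right (by norm_num) (by omega)
    have : (2:ℕ) ^ 10 = 1024 := by norm_num
    omega
  have hDM : 81 * D < M := by
    have h1 : (m+1)^d ≤ (m^2)^d := Nat.pow_le_pow_left (by nlinarith) d
    have h2 : D ^ 5 ≤ m ^ (10 * d) := by
      calc D ^ 5 ≤ ((m^2)^d)^5 := Nat.pow_le_pow_left h1 5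
        _ = m ^ (10 * d) := by rw [← pow_mul, ← pow_mul]; ring_nf
    have hD3 : 3 ≤ D := by
      calc 3 ≤ m + 1 := by omega
        _ = (m+1)^1 := (pow_one _).symm
        _ ≤ (m+1)^d := Nat.pow_le_pow_right (by omega) hd
    have h81 : 81 ≤ D^4 := by
      calc (81:ℕ) = 3^4 := by norm_num
        _ ≤ D^4 := Nat.pow_le_pow_left hD3 4
    have h815 : 81 * D ≤ D^5 := by
      calc 81 * D ≤ D^4 * D := Nat.mul_le_mul_right D h81
        _ = D^5 := by ring
    omega
  have htM : 10 * t ≤ M := by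
    rw [ht, mul_comm]
    exact Nat.div_mul_le_self M 10
  -- the key arithmetic inequality, in ℕ
  have keynat : 10 ^ (M + 1) * (18 ^ t * 2 ^ D) < 18 ^ M := by
    have hmain : 10 ^ (M+1) * 2 ^ D < 18 ^ (M - t) := by
      rw [← Nat.pow_lt_pow_iff_left (n := 10) (by norm_num)]
      have e1 : ((10:ℕ) ^ (M+1) * 2 ^ D) ^ 10 = 10 ^ (10*M) * (10 ^ 10 * 2 ^ (10*D)) := by
        rw [mul_pow, ← pow_mul, ← pow_mul]
        rw [show (M+1)*10 = 10*M + 10 by ring, pow_add]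
        ring_nf
      have e2 : ((18:ℕ) ^ (M - t)) ^ 10 = 18 ^ (10 * (M - t)) := by
        rw [← pow_mul]; ring_nf
      rw [e1, e2]
      have step1 : (10:ℕ) ^ 10 * 2 ^ (10*D) < 2 ^ (4*M) := by
        calc (10:ℕ) ^ 10 * 2 ^ (10*D) ≤ 2 ^ 34 * 2 ^ (10*D) := by
              have : (10:ℕ)^10 ≤ 2^34 := by norm_num
              exact Nat.mul_le_mul_right _ this
          _ = 2 ^ (34 + 10*D) := by rw [← pow_add]
          _ < 2 ^ (4*M) := Nat.pow_lt_pow_right (by norm_num) (by omega)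
      calc 10 ^ (10*M) * (10 ^ 10 * 2 ^ (10*D))
          < 10 ^ (10*M) * 2 ^ (4*M) :=
            mul_lt_mul_of_pos_left step1 (pow_pos (by norm_num) _)
        _ ≤ 10 ^ (10*M) * 19 ^ M := by
            apply Nat.mul_le_mul_left
            calc (2:ℕ) ^ (4*M) = 16 ^ M := by rw [show (16:ℕ) = 2^4 by norm_num, ← pow_mul]
              _ ≤ 19 ^ M := Nat.pow_le_pow_left (by norm_num) M
        _ = (19 * 10 ^ 10) ^ M := by rw [mul_pow, ← pow_mul]; ring_nf
        _ ≤ (18 ^ 9) ^ M := Nat.pow_le_pow_left (by norm_num) M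
        _ = 18 ^ (9 * M) := by rw [← pow_mul]
        _ ≤ 18 ^ (10 * (M - t)) := Nat.pow_le_pow_right (by norm_num) (by omega)
    calc 10 ^ (M+1) * (18 ^ t * 2 ^ D) = 18 ^ t * (10 ^ (M+1) * 2 ^ D) := by ring
      _ < 18 ^ t * 18 ^ (M - t) :=
          mul_lt_mul_of_pos_left hmain (pow_pos (by norm_num) _)
      _ = 18 ^ M := by rw [← pow_add]; congr 1; omega
  -- Step B: from small pdeg to a good polynomial
  set Bad : ((Fin m → Bool) → Bool) → Prop := fun g =>
    ∃ P : MvPolynomial (Fin m) ℝ, P.totalDegree ≤ d ∧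
      (X.filter fun x => evalBool x P ≠ (if g x then (1:ℝ) else 0)).card ≤ t with hBadDef
  have hBadCongr : ∀ g g' : (Fin m → Bool) → Bool, (∀ x ∈ X, g x = g' x) →
      Bad g → Bad g' := by
    rintro g g' hgg' ⟨P, hPd, hPc⟩
    refine ⟨P, hPd, le_trans (le_of_eq (congrArg Finset.card ?_)) hPc⟩
    apply Finset.filter_congr
    intro x hx
    simp [hgg' x hx]
  have hStepB : ∀ i : Fin k, pdeg (1/10) (F i) ≤ d → Bad (F i) := by
    intro i hi
    obtain ⟨k', w', P', hw', hw1', hdeg', herr'⟩ :=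
      hasProbPoly_of_pdeg_le (by norm_num) hi
    set dis : Fin k' → ℕ := fun j =>
      (X.filter fun x => evalBool x (P' j) ≠ (if F i x then (1:ℝ) else 0)).card with hdis
    have hexp : ∑ j, w' j * (dis j : ℝ) ≤ (M : ℝ) / 10 := by
      have h1 : ∀ j, w' j * (dis j : ℝ)
          = ∑ x ∈ X, (if evalBool x (P' j) ≠ (if F i x then (1:ℝ) else 0)
              then w' j else 0) := by
        intro j
        rw [← Finset.sum_filter, Finset.sum_const, nsmul_eq_mul, mul_comm]
      rw [Finset.sum_congr rfl (fun j _ => h1 j), Finset.sum_comm]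
      calc ∑ x ∈ X, ∑ j, (if evalBool x (P' j) ≠ (if F i x then (1:ℝ) else 0)
              then w' j else 0)
          ≤ ∑ _x ∈ X, (1:ℝ)/10 := by
            apply Finset.sum_le_sum
            intro x _
            rw [← Finset.sum_filter]
            exact herr' x
        _ = (M:ℝ)/10 := by rw [Finset.sum_const, hX, nsmul_eq_mul]; ring
    have hex : ∃ j, (dis j : ℝ) ≤ (M:ℝ)/10 := by
      by_contra hc
      push_neg at hc
      obtain ⟨j₀, _, hj₀⟩ := Finset.exists_ne_zero_of_sum_ne_zero
        (by rw [hw1']; norm_num : ∑ j, w' j ≠ 0)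
      have hlt : ∑ j, w' j * ((M:ℝ)/10) < ∑ j, w' j * (dis j : ℝ) := by
        apply Finset.sum_lt_sum
        · intro j _
          rcases eq_or_lt_of_le (hw' j) with h | h
          · rw [← h]; simp
          · exact mul_le_mul_of_nonneg_left (le_of_lt (hc j)) (le_of_lt h)
        · refine ⟨j₀, Finset.mem_univ _, ?_⟩
          have hp : 0 < w' j₀ := lt_of_le_of_ne (hw' j₀) (Ne.symm hj₀)
          exact mul_lt_mul_of_pos_left (hc j₀) hp
      rw [← Finset.sum_mul, hw1', one_mul] at hlt
      linarith
    obtain ⟨j, hj⟩ := hex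
    refine ⟨P' j, hdeg' j, ?_⟩
    have h10 : (dis j : ℝ) * 10 ≤ (M:ℝ) := by linarith
    have h10' : dis j * 10 ≤ M := by exact_mod_cast h10
    exact (Nat.le_div_iff_mul_le (by norm_num)).mpr h10'
  -- the canonical bad set
  set T : Finset ((Fin m → Bool) → Bool) :=
    Finset.univ.filter (fun g => Bad g ∧ ∀ x, x ∉ X → g x = false) with hT
  -- partition bound
  have hpart : ∑ i ∈ Finset.univ.filter (fun i => pdeg (1/10) (F i) ≤ d), w i
      ≤ (T.card : ℝ) * ((2:ℝ)^M)⁻¹ := by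
    have hsub : Finset.univ.filter (fun i => pdeg (1/10) (F i) ≤ d)
        ⊆ T.biUnion (fun g => Finset.univ.filter (fun i => ∀ x ∈ X, F i x = g x)) := by
      intro i hi
      rw [Finset.mem_filter] at hi
      have hBi : Bad (F i) := hStepB i hi.2
      set g : (Fin m → Bool) → Bool := fun x => if x ∈ X then F i x else false with hg
      have hgX : ∀ x ∈ X, F i x = g x := fun x hx => by simp [hg, hx]
      refine Finset.mem_biUnion.mpr ⟨g, ?_, ?_⟩
      · rw [hT, Finset.mem_filter]
        exact ⟨Finset.mem_univ _, hBadCongr _ _ hgX hBi, fun x hx => by simp [hg, hx]⟩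
      · rw [Finset.mem_filter]; exact ⟨Finset.mem_univ _, hgX⟩
    have hdisj : (↑T : Set ((Fin m → Bool) → Bool)).PairwiseDisjoint
        (fun g => Finset.univ.filter (fun i => ∀ x ∈ X, F i x = g x)) := by
      intro g hg g' hg' hne
      simp only [Function.onFun]
      rw [Finset.disjoint_left]
      intro i hi hi'
      apply hne
      rw [Finset.mem_coe, hT, Finset.mem_filter] at hg hg'
      rw [Finset.mem_filter] at hi hi'
      funext x
      by_cases hx : x ∈ X
      · rw [← hi.2 x hx, ← hi'.2 x hx]
      · rw [hg.2.2 x hx, hg'.2.2 x hx]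
    calc ∑ i ∈ Finset.univ.filter (fun i => pdeg (1/10) (F i) ≤ d), w i
        ≤ ∑ i ∈ T.biUnion (fun g => Finset.univ.filter (fun i => ∀ x ∈ X, F i x = g x)),
            w i := Finset.sum_le_sum_of_subset_of_nonneg hsub (fun i _ _ => hw i)
      _ = ∑ g ∈ T, ∑ i ∈ Finset.univ.filter (fun i => ∀ x ∈ X, F i x = g x), w i :=
          Finset.sum_biUnion hdisj
      _ = ∑ _g ∈ T, ((2:ℝ)^M)⁻¹ := Finset.sum_congr rfl (fun g _ => hunif g)
      _ = (T.card : ℝ) * ((2:ℝ)^M)⁻¹ := by rw [Finset.sum_const, nsmul_eq_mul]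
  -- choose polynomials for bad functions
  set Pg : ((Fin m → Bool) → Bool) → MvPolynomial (Fin m) ℝ :=
    fun g => if h : Bad g then h.choose else 0 with hPgdef
  have hPg : ∀ g, Bad g → (Pg g).totalDegree ≤ d ∧
      (X.filter fun x => evalBool x (Pg g) ≠ (if g x then (1:ℝ) else 0)).card ≤ t := by
    intro g hg
    simp only [hPgdef, dif_pos hg]
    exact hg.choose_spec
  set Bset : ((Fin m → Bool) → Bool) → Finset (Fin m → Bool) :=
    fun g => X.filter fun x => evalBool x (Pg g) ≠ (if g x then (1:ℝ) else 0) with hBsetdef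
  set PB : Finset (Finset (Fin m → Bool)) := X.powerset.filter (fun B => B.card ≤ t)
    with hPBdef
  -- counting T
  have hTcard : T.card ≤ PB.card * (2 ^ t * 2 ^ D) := by
    have hfib : ∀ g ∈ T, Bset g ∈ PB := by
      intro g hgT
      rcases Finset.mem_filter.mp hgT with ⟨_, hBad, _⟩
      rw [hPBdef, Finset.mem_filter, Finset.mem_powerset]
      exact ⟨Finset.filter_subset _ _, (hPg g hBad).2⟩
    rw [Finset.card_eq_sum_card_fiberwise hfib]
    have hbound : ∀ B ∈ PB, (T.filter (fun g => Bset g = B)).card ≤ 2^t * 2^D := by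
      intro B hB
      rcases Finset.mem_filter.mp hB with ⟨hBX, hBt⟩
      rw [Finset.mem_powerset] at hBX
      set r := restrL (X \ B) with hr
      set W := Submodule.map r (Vspan m d) with hW
      set ZB := (T.filter (fun g => Bset g = B)).image (fun g => r (phiL m (Pg g))) with hZB
      have hvalT : ∀ g ∈ T.filter (fun g => Bset g = B), ∀ x ∈ X \ B,
          evalBool x (Pg g) = (if g x then (1:ℝ) else 0) := by
        intro g hg x hx
        rcases Finset.mem_filter.mp hg with ⟨hgT, hgB⟩
        rcases Finset.mem_filter.mp hgT with ⟨_, hBad, _⟩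
        rcases Finset.mem_sdiff.mp hx with ⟨hxX, hxB⟩
        by_contra hne
        apply hxB
        rw [← hgB, hBsetdef]
        exact Finset.mem_filter.mpr ⟨hxX, hne⟩
      have hZcard : ZB.card ≤ 2 ^ D := by
        apply two_value_card_le D W
        · rw [hW]
          exact le_trans (Submodule.finrank_map_le r (Vspan m d)) (finrank_Vspan_le m d)
        · intro v hv
          obtain ⟨g, hg, rfl⟩ := Finset.mem_image.mp hv
          rcases Finset.mem_filter.mp hg with ⟨hgT, _⟩
          rcases Finset.mem_filter.mp hgT with ⟨_, hBad, _⟩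
          exact Submodule.mem_map_of_mem (mem_Vspan _ (hPg g hBad).1)
        · intro x
          refine ⟨0, 1, ?_⟩
          intro v hv
          obtain ⟨g, hg, rfl⟩ := Finset.mem_image.mp hv
          by_cases hx : x ∈ X \ B
          · rw [hr, restrL_apply, if_pos hx, phiL_apply, hvalT g hg x hx]
            by_cases hgx : g x <;> simp [hgx]
          · rw [hr, restrL_apply, if_neg hx]
            left; rfl
      have hinj : (T.filter (fun g => Bset g = B)).card ≤ (B.powerset ×ˢ ZB).card := by
        apply Finset.card_le_card_of_injOn
          (fun g => (B.filter (fun x => g x = true), r (phiL m (Pg g))))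
        · intro g hg
          rw [Finset.mem_coe, Finset.mem_product]
          constructor
          · exact Finset.mem_powerset.mpr (Finset.filter_subset _ _)
          · exact Finset.mem_image_of_mem _ hg
        · intro g hgm g' hgm' heq
          have h1 : B.filter (fun x => g x = true) = B.filter (fun x => g' x = true) :=
            congrArg Prod.fst heq
          have h2 : r (phiL m (Pg g)) = r (phiL m (Pg g')) := congrArg Prod.snd heq
          have hgm3 : g ∈ T.filter (fun g => Bset g = B) := Finset.mem_coe.mp hgm
          have hgm3' : g' ∈ T.filter (fun g => Bset g = B) := Finset.mem_coe.mp hgm'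
          have hout : ∀ x, x ∉ X → g x = false :=
            (Finset.mem_filter.mp (Finset.mem_filter.mp hgm3).1).2.2
          have hout' : ∀ x, x ∉ X → g' x = false :=
            (Finset.mem_filter.mp (Finset.mem_filter.mp hgm3').1).2.2
          funext x
          by_cases hxB : x ∈ B
          · have hxf := Finset.ext_iff.mp h1 x
            simp only [Finset.mem_filter, hxB, true_and] at hxf
            by_cases hgx : g x = true
            · rw [hgx, hxf.mp hgx]
            · have hgx' : ¬ g' x = true := fun h => hgx (hxf.mpr h)
              rw [Bool.not_eq_true] at hgx hgx'
              rw [hgx, hgx']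
          · by_cases hxX : x ∈ X
            · have hxXB : x ∈ X \ B := Finset.mem_sdiff.mpr ⟨hxX, hxB⟩
              have hv := congrFun h2 x
              rw [hr] at hv
              rw [restrL_apply, restrL_apply, if_pos hxXB, if_pos hxXB,
                phiL_apply, phiL_apply, hvalT g hgm3 x hxXB, hvalT g' hgm3' x hxXB] at hv
              by_cases hgx : g x = true
              · by_cases hgx' : g' x = true
                · rw [hgx, hgx']
                · rw [if_pos hgx, if_neg hgx'] at hv
                  norm_num at hv
              · by_cases hgx' : g' x = true
                · rw [if_neg hgx, if_pos hgx'] at hv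
                  norm_num at hv
                · rw [Bool.not_eq_true] at hgx hgx'
                  rw [hgx, hgx']
            · rw [hout x hxX, hout' x hxX]
      calc (T.filter (fun g => Bset g = B)).card ≤ (B.powerset ×ˢ ZB).card := hinj
        _ = 2 ^ B.card * ZB.card := by rw [Finset.card_product, Finset.card_powerset]
        _ ≤ 2 ^ t * 2 ^ D :=
            Nat.mul_le_mul (Nat.pow_le_pow_right (by norm_num) hBt) hZcard
    calc ∑ B ∈ PB, (T.filter (fun g => Bset g = B)).card
        ≤ ∑ _B ∈ PB, 2^t*2^D := Finset.sum_le_sum hbound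
      _ = PB.card * (2^t*2^D) := by rw [Finset.sum_const, smul_eq_mul]
  -- bound PB.card
  have hNB : (PB.card : ℝ) * (1/9)^t ≤ (10/9)^M := by
    have h1 : (PB.card : ℝ) * (1/9)^t = ∑ _B ∈ PB, (1/9:ℝ)^t := by
      rw [Finset.sum_const, nsmul_eq_mul]
    rw [h1]
    calc ∑ B ∈ PB, (1/9:ℝ)^t ≤ ∑ B ∈ PB, (1/9:ℝ)^B.card := by
          apply Finset.sum_le_sum
          intro B hB
          rcases Finset.mem_filter.mp hB with ⟨_, hBt⟩
          exact pow_le_pow_of_le_one (by norm_num) (by norm_num) hBt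
      _ ≤ ∑ B ∈ X.powerset, (1/9:ℝ)^B.card :=
          Finset.sum_le_sum_of_subset_of_nonneg (Finset.filter_subset _ _)
            (fun B _ _ => by positivity)
      _ = (10/9:ℝ)^M := by
          have hpa := Finset.prod_add (fun _ : Fin m → Bool => (1/9:ℝ)) (fun _ => 1) X
          rw [Finset.prod_const] at hpa
          rw [← hX]
          rw [show ((1:ℝ)/9 + 1) = 10/9 by norm_num] at hpa
          rw [hpa]
          apply Finset.sum_congr rfl
          intro B _
          rw [Finset.prod_const, Finset.prod_const, one_pow, mul_one]
  -- final numeric computation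
  have h2M : (0:ℝ) < 2^M := by positivity
  have h9t : (0:ℝ) < 9^t := by positivity
  have hfinal : (T.card : ℝ) * ((2:ℝ)^M)⁻¹ < 1/10 := by
    have hT1 : (T.card : ℝ) ≤ (PB.card : ℝ) * (2^t * 2^D) := by exact_mod_cast hTcard
    have hNB' : (PB.card : ℝ) ≤ (10/9)^M * 9^t := by
      have h9 : ((1:ℝ)/9)^t = (9^t)⁻¹ := by rw [one_div, inv_pow]
      rw [h9] at hNB
      calc (PB.card : ℝ) = (PB.card : ℝ) * (9^t)⁻¹ * 9^t := by field_simp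
        _ ≤ (10/9)^M * 9^t := by
            apply mul_le_mul_of_nonneg_right hNB (le_of_lt h9t)
    have hkey : (10:ℝ)^M * 10 * (9^t * (2^t * 2^D)) < 9^M * 2^M := by
      have := keynat
      have hcast : (10:ℝ) ^ (M + 1) * (18 ^ t * 2 ^ D) < 18 ^ M := by exact_mod_cast this
      have e18t : (18:ℝ)^t = 2^t * 9^t := by rw [show (18:ℝ) = 2*9 by norm_num, mul_pow]
      have e18M : (18:ℝ)^M = 2^M * 9^M := by rw [show (18:ℝ) = 2*9 by norm_num, mul_pow]
      rw [e18t, e18M, pow_succ] at hcast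
      nlinarith [hcast]
    calc (T.card : ℝ) * ((2:ℝ)^M)⁻¹
        ≤ ((10/9)^M * 9^t * (2^t * 2^D)) * ((2:ℝ)^M)⁻¹ := by
          apply mul_le_mul_of_nonneg_right _ (le_of_lt (inv_pos.mpr h2M))
          calc (T.card : ℝ) ≤ (PB.card : ℝ) * (2^t * 2^D) := hT1
            _ ≤ ((10/9)^M * 9^t) * (2^t * 2^D) := by
                apply mul_le_mul_of_nonneg_right hNB'
                positivity
      _ < 1/10 := by
          rw [mul_inv_lt_iff₀ h2M]
          have h9M : (0:ℝ) < 9^M := by positivity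
          have eG : ((10:ℝ)/9)^M * 9^t * (2^t * 2^D)
              = (10^M * (9^t * (2^t * 2^D))) / 9^M := by
            rw [div_pow]; ring
          rw [eG, div_lt_iff₀ h9M]
          nlinarith [hkey]
  exact lt_of_le_of_lt hpart hfinal
end

section
/- Let m ≥ 2, d ≥ 1 and M be positive integers with M > m^{10d}, and let X ⊆ {0,1}^m with |X| = M. Then the number of functions g : X → {0,1} for which there exists a real polynomial P in m variables of total degree at most d agreeing with g on at least 9M/10 points of X is at most 2^{9M/10}. -/
open scoped Classical

lemma card_bool_in_span {α ι : Type} [Fintype α] [Fintype ι] (F : α → ι → ℝ) :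
    Nat.card {w : α → Bool // ∃ c : ι → ℝ,
      ∀ x, (if w x then (1:ℝ) else 0) = ∑ i, c i * F x i} ≤ 2 ^ Fintype.card ι := by
  obtain ⟨t, hts, hsp, hli⟩ := exists_linearIndependent ℝ (Set.range F)
  have htfin : t.Finite := hli.setFinite
  have : Fintype t := htfin.fintype
  have hrep : ∀ u : t, ∃ x : α, F x = u := fun u => hts u.2
  choose pick hpick using hrep
  have hmem : ∀ x : α, ∃ μ : (ι → ℝ) →₀ ℝ, (↑μ.support : Set (ι → ℝ)) ⊆ t ∧
      (μ.sum fun mi r => r • mi) = F x := by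
    intro x
    exact Submodule.mem_span_set.mp (by rw [hsp]; exact Submodule.subset_span ⟨x, rfl⟩)
  choose μ hμt hμs using hmem
  have hkey : ∀ (w : α → Bool) (c : ι → ℝ),
      (∀ x, (if w x then (1:ℝ) else 0) = ∑ i, c i * F x i) →
      ∀ x : α, (if w x then (1:ℝ) else 0) =
        ∑ u ∈ (μ x).support.attach,
          (μ x) u.1 * (if w (pick ⟨u.1, hμt x u.2⟩) then (1:ℝ) else 0) := by
    intro w c hc x
    rw [hc x]
    have hFx : F x = ∑ u ∈ (μ x).support, (μ x) u • u := by rw [← hμs x]; rfl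
    have step1 : ∑ i, c i * F x i
        = ∑ u ∈ (μ x).support, (μ x) u * (∑ i, c i * u i) := by
      rw [hFx]
      simp only [Finset.sum_apply, Pi.smul_apply, smul_eq_mul, Finset.mul_sum]
      rw [Finset.sum_comm]
      exact Finset.sum_congr rfl fun u _ => Finset.sum_congr rfl fun i _ => by ring
    rw [step1, ← Finset.sum_attach]
    refine Finset.sum_congr rfl fun u _ => ?_
    have : ∑ i, c i * (u.1) i = (if w (pick ⟨u.1, hμt x u.2⟩) then (1:ℝ) else 0) := by
      rw [hc (pick ⟨u.1, hμt x u.2⟩), hpick ⟨u.1, hμt x u.2⟩]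
    rw [this]
  have hinj : Function.Injective
      (fun (g : {w : α → Bool // ∃ c : ι → ℝ,
        ∀ x, (if w x then (1:ℝ) else 0) = ∑ i, c i * F x i}) => fun u : t => g.1 (pick u)) := by
    rintro ⟨w, c, hc⟩ ⟨w', c', hc'⟩ h
    simp only at h
    have hval : ∀ u : t, w (pick u) = w' (pick u) := fun u => congrFun h u
    have hbool : ∀ (b b' : Bool), ((if b then (1:ℝ) else 0) = (if b' then 1 else 0)) → b = b' :=
      fun b b' => by cases b <;> cases b' <;> simp
    have : w = w' := by
      funext x
      refine hbool _ _ ?_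
      rw [hkey w c hc x, hkey w' c' hc' x]
      exact Finset.sum_congr rfl fun u _ => by rw [hval]
    exact Subtype.ext this
  calc Nat.card {w : α → Bool // ∃ c : ι → ℝ,
        ∀ x, (if w x then (1:ℝ) else 0) = ∑ i, c i * F x i}
      ≤ Nat.card (t → Bool) := Nat.card_le_card_of_injective _ hinj
    _ = 2 ^ Fintype.card t := by simp [Nat.card_eq_fintype_card, Fintype.card_fun]
    _ ≤ 2 ^ Fintype.card ι := by
        apply Nat.pow_le_pow_right (by norm_num)
        have := hli.fintype_card_le_finrank
        simpa using this.trans (by simp [Module.finrank_fintype_fun_eq_card])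

noncomputable def chi {m : ℕ} (S : Finset (Fin m)) (a : Fin m → Bool) : ℝ :=
  ∏ i ∈ S, (if a i then (1:ℝ) else 0)

lemma poly_span {m d : ℕ} (P : MvPolynomial (Fin m) ℝ) (hP : P.totalDegree ≤ d) :
    ∃ c : {S : Finset (Fin m) // S.card ≤ d} → ℝ,
      ∀ a : Fin m → Bool, evalBool a P = ∑ S, c S * chi S.1 a := by
  classical
  let f : (Fin m →₀ ℕ) → {S : Finset (Fin m) // S.card ≤ d} := fun μ =>
    if h : μ.support.card ≤ d then ⟨μ.support, h⟩ else ⟨∅, by simp⟩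
  refine ⟨fun S => ∑ μ ∈ P.support.filter (fun μ => f μ = S), MvPolynomial.coeff μ P,
    fun a => ?_⟩
  have hsup : ∀ μ ∈ P.support, μ.support.card ≤ d := by
    intro μ hμ
    have h1 : μ.support.card ≤ μ.sum fun _ e => e := by
      rw [Finsupp.sum, Finset.card_eq_sum_ones]
      exact Finset.sum_le_sum fun i hi =>
        Nat.one_le_iff_ne_zero.mpr (Finsupp.mem_support_iff.mp hi)
    exact h1.trans ((MvPolynomial.le_totalDegree hμ).trans hP)
  have heval : evalBool a P = ∑ μ ∈ P.support, MvPolynomial.coeff μ P * chi μ.support a := by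
    rw [evalBool, MvPolynomial.eval_eq]
    refine Finset.sum_congr rfl fun μ hμ => ?_
    congr 1
    refine Finset.prod_congr rfl fun i hi => ?_
    have h0 : μ i ≠ 0 := Finsupp.mem_support_iff.mp hi
    cases a i <;> simp [h0, zero_pow]
  rw [heval,
    ← Finset.sum_fiberwise P.support f (fun μ => MvPolynomial.coeff μ P * chi μ.support a)]
  refine Finset.sum_congr rfl fun S _ => ?_
  rw [Finset.sum_mul]
  refine Finset.sum_congr rfl fun μ hμ => ?_
  obtain ⟨hμP, hfS⟩ := Finset.mem_filter.mp hμ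
  have : μ.support = S.1 := by
    rw [← hfS]; simp [f, dif_pos (hsup μ hμP)]
  rw [this]

lemma card_subsets_le {m d : ℕ} :
    Fintype.card {S : Finset (Fin m) // S.card ≤ d} ≤ (m+1)^d := by
  classical
  have h : Function.Injective (fun (S : {S : Finset (Fin m) // S.card ≤ d}) =>
      (fun i : Fin d => (S.1.sort (· ≤ ·))[(i:ℕ)]?)) := by
    intro S T hST
    have key : ∀ (A B : {S : Finset (Fin m) // S.card ≤ d}),
        (fun i : Fin d => (A.1.sort (· ≤ ·))[(i:ℕ)]?) =
        (fun i : Fin d => (B.1.sort (· ≤ ·))[(i:ℕ)]?) →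
        ∀ x, x ∈ A.1 → x ∈ B.1 := by
      intro A B hAB x hx
      have hx' : x ∈ A.1.sort (· ≤ ·) := (Finset.mem_sort _).mpr hx
      obtain ⟨n, hn⟩ := List.mem_iff_getElem?.mp hx'
      have hlt : n < d := by
        have h1 : n < (A.1.sort (· ≤ ·)).length := by
          by_contra hc
          rw [List.getElem?_eq_none (Nat.le_of_not_lt hc)] at hn
          cases hn
        rw [Finset.length_sort] at h1
        exact lt_of_lt_of_le h1 A.2
      have := congrFun hAB ⟨n, hlt⟩
      simp only at this
      rw [hn] at this
      have : x ∈ B.1.sort (· ≤ ·) := List.mem_iff_getElem?.mpr ⟨n, this.symm⟩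
      exact (Finset.mem_sort _).mp this
    exact Subtype.ext (Finset.ext fun x => ⟨key S T hST x, key T S hST.symm x⟩)
  calc Fintype.card {S : Finset (Fin m) // S.card ≤ d}
      ≤ Fintype.card (Fin d → Option (Fin m)) := Fintype.card_le_of_injective _ h
    _ = (m+1)^d := by simp

lemma card_subsets_ge {m d : ℕ} (hd : 1 ≤ d) :
    m + 1 ≤ Fintype.card {S : Finset (Fin m) // S.card ≤ d} := by
  classical
  have h : Function.Injective (fun (o : Option (Fin m)) =>
      (⟨o.elim ∅ (fun i => {i}), by cases o <;> simp <;> omega⟩ :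
        {S : Finset (Fin m) // S.card ≤ d})) := by
    intro o o' h
    have := congrArg Subtype.val h
    cases o <;> cases o' <;> simp_all [Finset.ext_iff]
  have := Fintype.card_le_of_injective _ h
  simpa using this

lemma arith_nat {M D : ℕ} (h3 : 3 ≤ D) (h5 : D^5 < M) :
    10^M * 2^(D + M/10 + 1) ≤ 18^(M - M/10) := by
  set q := M / 10 with hq
  set r := M % 10 with hr
  obtain ⟨hM10, hr10⟩ : M = 10*q + r ∧ r < 10 := by constructor <;> omega
  have hD4 : 81 ≤ D^4 := by
    calc (81:ℕ) = 3^4 := by norm_num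
    _ ≤ D^4 := Nat.pow_le_pow_left h3 4
  have hMD : 81 * D < M := by
    calc 81 * D ≤ D^4 * D := Nat.mul_le_mul_right _ hD4
    _ = D^5 := by ring
    _ < M := h5
  have hqD : 8 * D ≤ q := by
    rw [hq, Nat.le_div_iff_mul_le (by norm_num)]
    omega
  have hD1 : D + 1 ≤ 3 * q := by omega
  have hMq : M - q = 9*q + r := by omega
  have e : (10:ℕ)^M = 10^(10*q) * 10^r := by rw [hM10, pow_add]
  have e2 : (2:ℕ)^(D + q + 1) = 2^(D+1) * 2^q := by
    rw [← pow_add]; congr 1; omega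
  have A1 : (2:ℕ)^(D+1) ≤ 2^(3*q) := Nat.pow_le_pow_right (by norm_num) hD1
  have A2 : (10:ℕ)^r ≤ 18^r := Nat.pow_le_pow_left (by norm_num) r
  have A3 : (10:ℕ)^(10*q) * (2^(3*q) * 2^q) ≤ 18^(9*q) := by
    have e3 : (10:ℕ)^(10*q) * (2^(3*q) * 2^q) = (10^10 * (2^3*2))^q := by
      rw [mul_pow, mul_pow, pow_mul, pow_mul]
    rw [e3, pow_mul]
    exact Nat.pow_le_pow_left (by norm_num) q
  rw [hMq]
  calc 10^M * 2^(D + q + 1)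
      = (10^(10*q) * (2^(D+1) * 2^q)) * 10^r := by rw [e, e2]; ring
    _ ≤ (10^(10*q) * (2^(3*q) * 2^q)) * 18^r :=
        Nat.mul_le_mul (Nat.mul_le_mul le_rfl (Nat.mul_le_mul A1 le_rfl)) A2
    _ ≤ 18^(9*q) * 18^r := Nat.mul_le_mul_right _ A3
    _ = 18^(9*q + r) := (pow_add 18 _ _).symm

lemma choose_bound (M k : ℕ) (hk : k ≤ M) :
    (M.choose k : ℝ) ≤ 10^k * (10/9)^(M-k) := by
  have hexp := add_pow (1/10 : ℝ) (9/10) M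
  have h1 : ((1:ℝ)/10 + 9/10) ^ M = 1 := by norm_num
  have hsum : ∑ i ∈ Finset.range (M+1), ((1:ℝ)/10)^i * (9/10)^(M-i) * (M.choose i : ℝ) = 1 := by
    rw [← hexp, h1]
  have hterm : ((1:ℝ)/10)^k * (9/10)^(M-k) * (M.choose k : ℝ) ≤ 1 := by
    refine le_trans (Finset.single_le_sum
      (f := fun i => ((1:ℝ)/10)^i * (9/10)^(M-i) * (M.choose i : ℝ))
      (fun i _ => by positivity) (Finset.mem_range.mpr (Nat.lt_succ_of_le hk))) (le_of_eq hsum)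
  have hpos : (0:ℝ) < ((1:ℝ)/10)^k * (9/10)^(M-k) := by positivity
  rw [mul_comm] at hterm
  have := (le_div_iff₀ hpos).mpr hterm
  calc (M.choose k : ℝ) ≤ 1 / (((1:ℝ)/10)^k * (9/10)^(M-k)) := this
    _ = 10^k * (10/9)^(M-k) := by
        rw [one_div, mul_inv, ← inv_pow, ← inv_pow]
        norm_num

theorem counting_bad_functions (m d M : ℕ) (hm : 2 ≤ m) (hd : 1 ≤ d)
    (hM : m ^ (10 * d) < M)
    (X : Finset (Fin m → Bool)) (hX : X.card = M) :
    (Nat.card {g : {x // x ∈ X} → Bool //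
        ∃ P : MvPolynomial (Fin m) ℝ, P.totalDegree ≤ d ∧
          9 * (M : ℝ) / 10 ≤
            ((Finset.univ.filter (fun x : {x // x ∈ X} =>
              evalBool (x : Fin m → Bool) P = (if g x then (1:ℝ) else 0))).card : ℝ)} : ℝ)
      ≤ 2 ^ (9 * (M : ℝ) / 10) := by
  classical
  set Y := {x // x ∈ X}
  set ι := {S : Finset (Fin m) // S.card ≤ d}
  set D := Fintype.card ι with hD
  set k := M / 10 with hk
  set s := M - k with hs
  have hcardY : Fintype.card Y = M := by rw [Fintype.card_coe, hX]
  -- basic numeric facts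
  have hD3 : 3 ≤ D := le_trans (by omega) (card_subsets_ge hd)
  have hD5 : D^5 < M := by
    have h1 : D ≤ (m+1)^d := card_subsets_le
    have h2 : (m+1)^d ≤ (m^2)^d := Nat.pow_le_pow_left (by nlinarith) d
    have h3 : D^5 ≤ ((m^2)^d)^5 := Nat.pow_le_pow_left (h1.trans h2) 5
    have h4 : ((m^2)^d)^5 = m^(10*d) := by rw [← pow_mul, ← pow_mul]; ring_nf
    omega
  have hMbig : 1024 ≤ M := by
    have : 2^(10*d) ≤ m^(10*d) := Nat.pow_le_pow_left hm _
    have h2 : 2^10 ≤ 2^(10*d) := Nat.pow_le_pow_right (by norm_num) (by omega)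
    omega
  have hkM : k + 1 ≤ M := by omega
  have hM10k : M < 10*k + 10 := by omega
  -- the bad predicate
  set p : (Y → Bool) → Prop := fun g =>
    ∃ P : MvPolynomial (Fin m) ℝ, P.totalDegree ≤ d ∧
      9 * (M : ℝ) / 10 ≤
        ((Finset.univ.filter (fun x : Y =>
          evalBool (x : Fin m → Bool) P = (if g x then (1:ℝ) else 0))).card : ℝ) with hp
  set q : Finset Y → (Y → Bool) → Prop := fun A g =>
    ∃ c : ι → ℝ, ∀ x ∈ A, (if g x then (1:ℝ) else 0) = ∑ S, c S * chi S.1 (x : Fin m → Bool)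
    with hq
  -- covering
  have hcover : (Finset.univ.filter p) ⊆
      ((Finset.univ : Finset Y).powersetCard s).biUnion
        (fun A => Finset.univ.filter (q A)) := by
    intro g hg
    obtain ⟨P, hdeg, hcard⟩ := (Finset.mem_filter.mp hg).2
    obtain ⟨c, hc⟩ := poly_span P hdeg
    set A₀ := Finset.univ.filter (fun x : Y =>
      evalBool (x : Fin m → Bool) P = (if g x then (1:ℝ) else 0)) with hA₀
    have hA₀card : s ≤ A₀.card := by
      by_contra hcon
      push_neg at hcon
      have h1 : (A₀.card : ℝ) + 1 ≤ s := by exact_mod_cast hcon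
      have h2 : ((s:ℕ) : ℝ) = (M:ℝ) - k := by
        rw [hs]; push_cast [Nat.cast_sub (by omega : k ≤ M)]; ring
      have h3 : (M:ℝ) < 10*(k:ℝ) + 10 := by exact_mod_cast hM10k
      rw [h2] at h1
      linarith
    obtain ⟨A, hAsub, hAcard⟩ := Finset.exists_subset_card_eq hA₀card
    refine Finset.mem_biUnion.mpr ⟨A, ?_, ?_⟩
    · exact Finset.mem_powersetCard.mpr ⟨Finset.subset_univ _, hAcard⟩
    · refine Finset.mem_filter.mpr ⟨Finset.mem_univ _, c, fun x hx => ?_⟩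
      have hx0 : x ∈ A₀ := hAsub hx
      have := (Finset.mem_filter.mp hx0).2
      rw [← this, hc]
  -- per-piece bound
  have hpiece : ∀ A ∈ (Finset.univ : Finset Y).powersetCard s,
      (Finset.univ.filter (q A)).card ≤ 2^D * 2^k := by
    intro A hA
    have hAcard : A.card = s := (Finset.mem_powersetCard.mp hA).2
    rw [← Fintype.card_subtype]
    -- injection
    have hinj : Function.Injective (fun (g : {g : Y → Bool // q A g}) =>
        ((⟨fun x : {x : Y // x ∈ A} => g.1 x.1, by
            obtain ⟨c, hc⟩ := g.2
            exact ⟨c, fun x => hc x.1 x.2⟩⟩ :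
          {w : {x : Y // x ∈ A} → Bool // ∃ c : ι → ℝ,
            ∀ x, (if w x then (1:ℝ) else 0) = ∑ S, c S * chi S.1 (x.1 : Fin m → Bool)}),
         (fun x : {x : Y // x ∉ A} => g.1 x.1))) := by
      rintro ⟨g, hg⟩ ⟨g', hg'⟩ h
      simp only [Prod.mk.injEq, Subtype.mk.injEq] at h
      refine Subtype.ext (funext fun y => ?_)
      by_cases hy : y ∈ A
      · exact congrFun h.1 ⟨y, hy⟩
      · exact congrFun h.2 ⟨y, hy⟩
    have hle := Fintype.card_le_of_injective _ hinj
    rw [Fintype.card_prod] at hle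
    refine hle.trans (Nat.mul_le_mul ?_ ?_)
    · have := card_bool_in_span (fun (x : {x : Y // x ∈ A}) (S : ι) =>
        chi S.1 (x.1 : Fin m → Bool))
      rw [Nat.card_eq_fintype_card] at this
      exact this
    · rw [Fintype.card_fun, Fintype.card_bool]
      apply Nat.pow_le_pow_right (by norm_num)
      have hkle : k ≤ M := by rw [hk]; exact Nat.div_le_self M 10
      have hms : M - s = k := by rw [hs]; exact Nat.sub_sub_self hkle
      have hcc : Fintype.card {x : Y // x ∉ A} = M - s := by
        rw [Fintype.card_subtype]
        have he : Finset.univ.filter (fun x : Y => x ∉ A) = Finset.univ \ A := by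
          ext x; simp
        rw [he, Finset.card_sdiff_of_subset (Finset.subset_univ _)]
        rw [Finset.card_univ, hcardY, hAcard]
      rw [hcc, hms]

  -- nat count
  have hnat : Nat.card {g : Y → Bool // p g} ≤ M.choose k * (2^D * 2^k) := by
    rw [Nat.card_eq_fintype_card, Fintype.card_subtype]
    calc (Finset.univ.filter p).card
        ≤ (((Finset.univ : Finset Y).powersetCard s).biUnion
            (fun A => Finset.univ.filter (q A))).card := Finset.card_le_card hcover
      _ ≤ ∑ A ∈ (Finset.univ : Finset Y).powersetCard s,
            (Finset.univ.filter (q A)).card := Finset.card_biUnion_le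
      _ ≤ ((Finset.univ : Finset Y).powersetCard s).card * (2^D * 2^k) := by
          rw [← smul_eq_mul]
          exact Finset.sum_le_card_nsmul _ _ _ hpiece
      _ = M.choose k * (2^D * 2^k) := by
          rw [Finset.card_powersetCard, Finset.card_univ, hcardY]
          congr 1
          rw [hs, Nat.choose_symm (by omega)]
  -- real chain
  have hreal1 : (Nat.card {g : Y → Bool // p g} : ℝ)
      ≤ (10:ℝ)^k * (10/9)^(M-k) * (2^D * 2^k) := by
    calc (Nat.card {g : Y → Bool // p g} : ℝ)
        ≤ (M.choose k * (2^D * 2^k) : ℕ) := by exact_mod_cast hnat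
      _ = (M.choose k : ℝ) * (2^D * 2^k) := by push_cast; ring
      _ ≤ (10:ℝ)^k * (10/9)^(M-k) * (2^D * 2^k) := by
          apply mul_le_mul_of_nonneg_right (choose_bound M k (by omega))
          positivity
  have hreal2 : (10:ℝ)^k * (10/9)^(M-k) * (2^D * 2^k) ≤ (2:ℝ)^(M-k-1) := by
    have hnat2 := arith_nat hD3 hD5
    have hcast : (10:ℝ)^M * 2^(D + k + 1) ≤ 18^(M-k) := by exact_mod_cast hnat2
    have h9pos : (0:ℝ) < 9^(M-k) := by positivity
    apply le_of_mul_le_mul_right _ h9pos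
    have elhs : (10:ℝ)^k * (10/9)^(M-k) * (2^D * 2^k) * 9^(M-k)
        = (10:ℝ)^M * 2^(D+k) := by
      have e1 : ((10:ℝ)/9)^(M-k) * 9^(M-k) = 10^(M-k) := by
        rw [div_pow, div_mul_cancel₀]
        positivity
      calc (10:ℝ)^k * (10/9)^(M-k) * (2^D * 2^k) * 9^(M-k)
          = 10^k * ((10/9)^(M-k) * 9^(M-k)) * (2^D * 2^k) := by ring
        _ = 10^k * 10^(M-k) * (2^D * 2^k) := by rw [e1]
        _ = 10^M * 2^(D+k) := by
            rw [← pow_add, ← pow_add]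
            congr 2
            omega
    rw [elhs]
    have erhs : (2:ℝ)^(M-k-1) * 9^(M-k) * 2 = 18^(M-k) := by
      have : (18:ℝ)^(M-k) = (2*9)^(M-k) := by norm_num
      rw [this, mul_pow]
      have e2 : (2:ℝ)^(M-k) = 2^(M-k-1) * 2 := by
        rw [← pow_succ]
        congr 1
        omega
      rw [e2]; ring
    have : (10:ℝ)^M * 2^(D+k) * 2 ≤ 2^(M-k-1) * 9^(M-k) * 2 := by
      rw [erhs]
      calc (10:ℝ)^M * 2^(D+k) * 2 = 10^M * 2^(D+k+1) := by rw [pow_succ]; ring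
        _ ≤ 18^(M-k) := hcast
    linarith
  have hreal3 : (2:ℝ)^(M-k-1) ≤ (2:ℝ) ^ (9 * (M:ℝ) / 10) := by
    rw [← Real.rpow_natCast 2 (M-k-1)]
    apply Real.rpow_le_rpow_of_exponent_le one_le_two
    have h1 : ((M-k-1:ℕ):ℝ) = (M:ℝ) - (k:ℝ) - 1 := by
      have e : M - k - 1 = M - (k+1) := by omega
      rw [e, Nat.cast_sub (by omega : k + 1 ≤ M)]
      push_cast
      ring
    have h3 : (M:ℝ) < 10*(k:ℝ) + 10 := by exact_mod_cast hM10k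
    rw [h1]
    linarith
  calc (Nat.card {g : Y → Bool // p g} : ℝ)
      ≤ (10:ℝ)^k * (10/9)^(M-k) * (2^D * 2^k) := hreal1
    _ ≤ (2:ℝ)^(M-k-1) := hreal2
    _ ≤ (2:ℝ) ^ (9 * (M:ℝ) / 10) := hreal3
end

section
/- Let A be a p × q matrix with all entries in {0,1} and let b ∈ {0,1}^p. If the linear system A·x = b has a solution x ∈ ℝ^q, then it has a rational solution x ∈ ℚ^q in which every coordinate can be written as a ratio of two integers each of absolute value at most 2^{5q²}. -/
open Matrix Module Submodule Finset

lemma rat_solvable {p q : ℕ} (A : Matrix (Fin p) (Fin q) ℚ) (b : Fin p → ℚ)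
    (hsol : ∃ x : Fin q → ℝ,
      (A.map (fun c => (c : ℝ))).mulVec x = fun i => ((b i : ℝ))) :
    ∃ x : Fin q → ℚ, A.mulVec x = b := by
  have hmem : b ∈ span ℚ (Set.range fun j => (fun i => A i j)) := by
    by_contra hbm
    obtain ⟨f, hf0, hf⟩ := Submodule.exists_dual_map_eq_bot_of_notMem hbm inferInstance
    set u : Fin p → ℚ := fun i => f (fun j => if i = j then 1 else 0) with hu
    have hfv : ∀ v : Fin p → ℚ, f v = ∑ i, v i * u i := by
      intro v
      conv_lhs => rw [pi_eq_sum_univ v]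
      rw [map_sum]
      exact Finset.sum_congr rfl fun i _ => by rw [_root_.map_smul, smul_eq_mul]
    obtain ⟨x, hx⟩ := hsol
    have hcol : ∀ j, f (fun i => A i j) = 0 := by
      intro j
      have : f (fun i => A i j) ∈ Submodule.map f (span ℚ (Set.range fun j => (fun i => A i j))) :=
        Submodule.mem_map_of_mem (subset_span (Set.mem_range_self j))
      rw [hf] at this
      exact (Submodule.mem_bot ℚ).mp this
    have key : (∑ i, (u i : ℝ) * ((A.map (fun c => (c : ℝ))).mulVec x) i)
        = ((f b : ℚ) : ℝ) := by
      rw [hx, hfv b]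
      push_cast
      exact Finset.sum_congr rfl fun i _ => by ring
    have key2 : (∑ i, (u i : ℝ) * ((A.map (fun c => (c : ℝ))).mulVec x) i) = 0 := by
      simp only [mulVec, dotProduct, Matrix.map_apply, Finset.mul_sum]
      rw [Finset.sum_comm]
      refine Finset.sum_eq_zero fun j _ => ?_
      have : ∑ i, (u i : ℝ) * ((A i j : ℝ) * x j) = (∑ i, ((A i j * u i : ℚ) : ℝ)) * x j := by
        rw [Finset.sum_mul]
        exact Finset.sum_congr rfl fun i _ => by push_cast; ring
      rw [this, ← Rat.cast_sum, ← hfv (fun i => A i j), hcol j]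
      simp
    rw [key2] at key
    exact hf0 (by exact_mod_cast key.symm)
  rw [mem_span_range_iff_exists_fun] at hmem
  obtain ⟨c, hc⟩ := hmem
  refine ⟨c, ?_⟩
  ext i
  rw [← hc]
  simp [mulVec, dotProduct, Finset.sum_apply, mul_comm]


-- numeric bound
lemma numeric_bound {q r : ℕ} (hrq : r ≤ q) :
    r.factorial * (2 ^ (q + 1)) ^ r ≤ 2 ^ (5 * q ^ 2) := by
  have h1 : r.factorial ≤ 2 ^ (q * q) := by
    calc r.factorial ≤ q.factorial := Nat.factorial_le hrq
      _ ≤ q ^ q := Nat.factorial_le_pow q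
      _ ≤ (2 ^ q) ^ q := Nat.pow_le_pow_left (Nat.le_of_lt (Nat.lt_two_pow_self (n := q))) q
      _ = 2 ^ (q * q) := by rw [← pow_mul]
  have h2 : (2 ^ (q + 1)) ^ r ≤ 2 ^ (2 * (q * q)) := by
    calc (2 ^ (q + 1)) ^ r ≤ (2 ^ (q + 1)) ^ q :=
          Nat.pow_le_pow_right (by positivity) hrq
      _ = 2 ^ ((q + 1) * q) := by rw [← pow_mul]
      _ ≤ 2 ^ (2 * (q * q)) := Nat.pow_le_pow_right (by norm_num) (by nlinarith)
  calc r.factorial * (2 ^ (q + 1)) ^ r ≤ 2 ^ (q * q) * 2 ^ (2 * (q * q)) :=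
        Nat.mul_le_mul h1 h2
    _ = 2 ^ (3 * (q * q)) := by rw [← pow_add]; ring_nf
    _ ≤ 2 ^ (5 * q ^ 2) := Nat.pow_le_pow_right (by norm_num) (by nlinarith [sq_nonneg q, pow_two q])

lemma bounded_solution {p q : ℕ} (A : Matrix (Fin p) (Fin q) ℚ) (b : Fin p → ℚ)
    (hA : ∀ i j, A i j = 0 ∨ A i j = 1) (hb : ∀ i, b i = 0 ∨ b i = 1)
    (x₀ : Fin q → ℚ) (hx₀ : A.mulVec x₀ = b) :
    ∃ x : Fin q → ℚ, A.mulVec x = b ∧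
      ∀ j, ∃ num den : ℤ, den ≠ 0 ∧ x j = (num : ℚ) / (den : ℚ) ∧
        |num| ≤ 2 ^ (5 * q ^ 2) ∧ |den| ≤ 2 ^ (5 * q ^ 2) := by
  classical
  -- deduplicated row index
  set S : Finset ((Fin q → ℚ) × ℚ) := Finset.image (fun i => (A i, b i)) Finset.univ with hS
  set ι := {s : (Fin q → ℚ) × ℚ // s ∈ S} with hι
  -- each element of S has 0/1 entries
  have hS01 : ∀ s : ι, (∀ j, s.1.1 j = 0 ∨ s.1.1 j = 1) ∧ (s.1.2 = 0 ∨ s.1.2 = 1) := by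
    rintro ⟨s, hs⟩
    obtain ⟨i, -, hi⟩ := Finset.mem_image.mp hs
    exact by cases hi; exact ⟨fun j => hA i j, hb i⟩
  -- cardinality bound
  have hcard : Fintype.card ι ≤ 2 ^ (q + 1) := by
    have hinj : Function.Injective
        (fun s : ι => ((fun j => decide (s.1.1 j = 1), decide (s.1.2 = 1)) :
          (Fin q → Bool) × Bool)) := by
      rintro ⟨s, hs⟩ ⟨s', hs'⟩ h
      simp only [Prod.mk.injEq] at h
      obtain ⟨h1, h2⟩ := h
      apply Subtype.ext
      have e1 : s.1 = s'.1 := by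
        funext j
        have hj := congrFun h1 j
        rw [decide_eq_decide] at hj
        rcases (hS01 ⟨s, hs⟩).1 j with ha | ha <;> rcases (hS01 ⟨s', hs'⟩).1 j with ha' | ha' <;>
          simp_all
      have e2 : s.2 = s'.2 := by
        rw [decide_eq_decide] at h2
        rcases (hS01 ⟨s, hs⟩).2 with ha | ha <;> rcases (hS01 ⟨s', hs'⟩).2 with ha' | ha' <;>
          simp_all
      exact Prod.ext e1 e2
    calc Fintype.card ι ≤ Fintype.card ((Fin q → Bool) × Bool) :=
          Fintype.card_le_of_injective _ hinj
      _ = 2 ^ (q + 1) := by simp [Fintype.card_fun, pow_succ]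
  -- columns and rhs
  set c : Fin q → (ι → ℚ) := fun j s => s.1.1 j with hc
  set b' : ι → ℚ := fun s => s.1.2 with hb'
  have hsol' : ∑ j, x₀ j • c j = b' := by
    funext s
    have hrow : (∑ j, x₀ j • c j) s = ∑ j, s.1.1 j * x₀ j := by
      simp [c, Finset.sum_apply, mul_comm]
    rw [hrow]
    obtain ⟨i, -, hi⟩ := Finset.mem_image.mp s.2
    have h1 : s.1.1 = A i := by rw [← hi]
    rw [h1]
    show _ = s.1.2
    have h2 : s.1.2 = b i := by rw [← hi]
    rw [h2, ← hx₀]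
    rfl
  have hbspan : b' ∈ span ℚ (Set.range c) := by
    rw [mem_span_range_iff_exists_fun]
    exact ⟨x₀, hsol'⟩
  -- linearly independent subfamily
  obtain ⟨t, hts, hspan, hli⟩ := exists_linearIndependent ℚ (Set.range c)
  haveI : Fintype t := ((Set.finite_range c).subset hts).fintype
  haveI : DecidableEq ↥t := Classical.decEq _
  have hrq : Fintype.card t ≤ q := by
    have h1 : finrank ℚ (span ℚ t) = t.toFinset.card := finrank_span_set_eq_card hli
    have h2 : finrank ℚ (span ℚ (Set.range c)) ≤ (Set.range c).toFinset.card :=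
      finrank_span_le_card _
    have h3 : (Set.range c).toFinset.card ≤ q := by
      rw [Set.toFinset_range]
      exact (Finset.card_image_le).trans (by simp)
    rw [Set.toFinset_card] at h1
    rw [← h1, hspan] at *
    omega
  -- matrices
  have hv01 : ∀ (v : ↥t) (i : ι), (v : ι → ℚ) i = 0 ∨ (v : ι → ℚ) i = 1 := by
    intro v i
    obtain ⟨j, hj⟩ := hts v.2
    rw [← hj]
    exact (hS01 i).1 j
  set B : Matrix ι ↥t ℚ := Matrix.of (fun i v => (v : ι → ℚ) i) with hB
  set Bz : Matrix ι ↥t ℤ := Matrix.of (fun i v => if (v : ι → ℚ) i = 1 then 1 else 0) with hBz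
  set bz : ι → ℤ := fun s => if b' s = 1 then 1 else 0 with hbz
  have hBcast : ∀ i v, ((Bz i v : ℤ) : ℚ) = B i v := by
    intro i v
    rcases hv01 v i with h | h <;> simp [hBz, hB, h]
  have hbcast : ∀ s, ((bz s : ℤ) : ℚ) = b' s := by
    intro s
    rcases (hS01 s).2 with h | h <;> simp [hbz, hb', h]
  set G : Matrix ↥t ↥t ℚ := Bᵀ * B with hG
  set Gz : Matrix ↥t ↥t ℤ := Bzᵀ * Bz with hGz
  set wz : ↥t → ℤ := Bzᵀ.mulVec bz with hwz
  set w : ↥t → ℚ := Bᵀ.mulVec b' with hw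
  have hGcast : Gz.map (fun z : ℤ => (z : ℚ)) = G := by
    ext u v
    simp only [Matrix.map_apply, hGz, hG, Matrix.mul_apply, transpose_apply]
    push_cast
    exact Finset.sum_congr rfl fun i _ => by rw [hBcast, hBcast]
  have hwcast : ∀ u, ((wz u : ℤ) : ℚ) = w u := by
    intro u
    simp only [hwz, hw, Matrix.mulVec, dotProduct, transpose_apply]
    push_cast
    exact Finset.sum_congr rfl fun i _ => by rw [hBcast, hbcast]
  have hdetcast : G.det = ((Gz.det : ℤ) : ℚ) := by
    rw [← hGcast]
    simpa using (RingHom.map_det (Int.castRingHom ℚ) Gz).symm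
  -- determinant nonzero
  have hdet : G.det ≠ 0 := by
    intro h0
    obtain ⟨y, hy0, hy⟩ := (Matrix.exists_mulVec_eq_zero_iff).mpr h0
    have hGy : Bᵀ.mulVec (B.mulVec y) = 0 := by
      rw [Matrix.mulVec_mulVec]; exact hy
    have hdd : dotProduct (B.mulVec y) (B.mulVec y) = 0 := by
      rw [Matrix.dotProduct_mulVec, ← Matrix.mulVec_transpose, hGy, zero_dotProduct]
    have hz : B.mulVec y = 0 := by
      funext i
      have := (Finset.sum_eq_zero_iff_of_nonneg
        (fun i _ => mul_self_nonneg (B.mulVec y i))).mp hdd i (Finset.mem_univ i)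
      exact mul_self_eq_zero.mp this
    apply hy0
    funext v
    refine Fintype.linearIndependent_iff.mp hli y ?_ v
    funext i
    have := congrFun hz i
    simpa [hB, Matrix.mulVec, dotProduct, Finset.sum_apply, mul_comm] using this
  have hdetz : Gz.det ≠ 0 := fun h0 => hdet (by rw [hdetcast, h0, Int.cast_zero])
  -- coefficients
  have hbt : b' ∈ span ℚ (Set.range ((↑) : t → (ι → ℚ))) := by
    rw [Subtype.range_coe, hspan]; exact hbspan
  obtain ⟨k, hk⟩ := (mem_span_range_iff_exists_fun ℚ).mp hbt
  have hBk : B.mulVec k = b' := by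
    funext s
    rw [← hk]
    simp [hB, Matrix.mulVec, dotProduct, Finset.sum_apply, mul_comm]
  have hGk : G.mulVec k = w := by
    rw [hG, ← Matrix.mulVec_mulVec, hBk]
  have hcramer : G.det • k = Matrix.cramer G w := by
    have hunit : IsUnit G := (Matrix.isUnit_iff_isUnit_det G).mpr (isUnit_iff_ne_zero.mpr hdet)
    apply Matrix.mulVec_injective_iff_isUnit.mpr hunit
    rw [Matrix.mulVec_smul, hGk, Matrix.mulVec_cramer]
  have hkval : ∀ v, k v = ((Matrix.cramer Gz wz v : ℤ) : ℚ) / ((Gz.det : ℤ) : ℚ) := by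
    intro v
    have h1 : Matrix.cramer G w v = ((Matrix.cramer Gz wz v : ℤ) : ℚ) := by
      rw [Matrix.cramer_apply, Matrix.cramer_apply]
      have : (Gz.updateCol v wz).map (fun z : ℤ => (z : ℚ)) = G.updateCol v w := by
        rw [Matrix.map_updateCol, hGcast,
          show ((fun z : ℤ => (z : ℚ)) ∘ wz) = w from funext hwcast]
      rw [← this]
      simpa using (RingHom.map_det (Int.castRingHom ℚ) (Gz.updateCol v wz)).symm
    have h2 := congrFun hcramer v
    simp only [Pi.smul_apply, smul_eq_mul] at h2
    rw [h1, hdetcast] at h2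
    rw [eq_div_iff (show ((Gz.det : ℤ) : ℚ) ≠ 0 by exact_mod_cast hdetz), mul_comm]
    exact h2
  -- entry bounds
  set n : ℤ := (Fintype.card ι : ℤ) with hn
  have hBz01 : ∀ i v, Bz i v = 0 ∨ Bz i v = 1 := by
    intro i v
    by_cases h : (v : ι → ℚ) i = 1 <;> simp [hBz, h]
  have hbz01 : ∀ s, bz s = 0 ∨ bz s = 1 := by
    intro s
    by_cases h : b' s = 1 <;> simp [hbz, h]
  have hsum01 : ∀ (f g : ι → ℤ), (∀ i, f i = 0 ∨ f i = 1) → (∀ i, g i = 0 ∨ g i = 1) →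
      |∑ i, f i * g i| ≤ n := by
    intro f g hf hg
    rw [abs_of_nonneg (Finset.sum_nonneg fun i _ => by
      rcases hf i with h | h <;> rcases hg i with h' | h' <;> simp [h, h'])]
    calc ∑ i, f i * g i ≤ ∑ _i : ι, (1 : ℤ) := Finset.sum_le_sum fun i _ => by
          rcases hf i with h | h <;> rcases hg i with h' | h' <;> simp [h, h']
      _ = n := by simp [hn]
  have hGzb : ∀ u v, |Gz u v| ≤ n := by
    intro u v
    simpa [hGz, Matrix.mul_apply] using hsum01 (fun i => Bz i u) (fun i => Bz i v)
      (fun i => hBz01 i u) (fun i => hBz01 i v)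
  have hwzb : ∀ u, |wz u| ≤ n := by
    intro u
    simpa [hwz, Matrix.mulVec, dotProduct] using hsum01 (fun i => Bz i u) bz
      (fun i => hBz01 i u) hbz01
  set r : ℕ := Fintype.card ↥t with hr
  have hbound : ∀ M : Matrix ↥t ↥t ℤ, (∀ u v, |M u v| ≤ n) → |M.det| ≤ 2 ^ (5 * q ^ 2) := by
    intro M hM
    have h1 : |M.det| ≤ r.factorial • n ^ r := by
      have := Matrix.det_le (A := M) (abv := AbsoluteValue.abs) (x := n)
        (fun i j => by simpa using hM i j)
      simpa [hr] using this
    have hn2 : n ≤ (2 : ℤ) ^ (q + 1) := by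
      rw [hn]
      exact_mod_cast hcard
    have hn0 : (0 : ℤ) ≤ n := by positivity
    calc |M.det| ≤ r.factorial • n ^ r := h1
      _ = (r.factorial : ℤ) * n ^ r := nsmul_eq_mul _ _
      _ ≤ (r.factorial : ℤ) * ((2 : ℤ) ^ (q + 1)) ^ r := by
          apply mul_le_mul_of_nonneg_left (pow_le_pow_left₀ hn0 hn2 r) (by positivity)
      _ = ((r.factorial * (2 ^ (q + 1)) ^ r : ℕ) : ℤ) := by push_cast; ring
      _ ≤ ((2 ^ (5 * q ^ 2) : ℕ) : ℤ) := by exact_mod_cast numeric_bound hrq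
      _ = 2 ^ (5 * q ^ 2) := by push_cast; ring
  -- representative column for each element of t
  have hrep : ∀ v : ↥t, ∃ j, c j = (v : ι → ℚ) := fun v => hts v.2
  set rep : ↥t → Fin q := fun v => (hrep v).choose with hrepdef
  have hrepspec : ∀ v, c (rep v) = (v : ι → ℚ) := fun v => (hrep v).choose_spec
  have hrepinj : Function.Injective rep := by
    intro v v' h
    apply Subtype.ext
    rw [← hrepspec v, ← hrepspec v', h]
  -- the solution
  set x : Fin q → ℚ := fun j => ∑ v : ↥t, if rep v = j then k v else 0 with hx
  have hAx : ∀ s : ι, ∑ j, s.1.1 j * x j = b' s := by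
    intro s
    have : ∑ j, s.1.1 j * x j = ∑ v : ↥t, s.1.1 (rep v) * k v := by
      rw [hx]
      simp only [Finset.mul_sum, mul_ite, mul_zero]
      rw [Finset.sum_comm]
      exact Finset.sum_congr rfl fun v _ => by rw [Finset.sum_ite_eq]; simp
    rw [this, ← hk]
    simp only [Finset.sum_apply, Pi.smul_apply, smul_eq_mul]
    exact Finset.sum_congr rfl fun v _ => by
      rw [← hrepspec v]; exact mul_comm _ _
  refine ⟨x, ?_, ?_⟩
  · funext i
    have hmem : (A i, b i) ∈ S := Finset.mem_image_of_mem _ (Finset.mem_univ i)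
    have := hAx ⟨(A i, b i), hmem⟩
    exact this
  · intro j
    by_cases hex : ∃ v : ↥t, rep v = j
    · obtain ⟨v, hv⟩ := hex
      have hxj : x j = k v := by
        show (∑ v' : ↥t, if rep v' = j then k v' else 0) = k v
        rw [Finset.sum_eq_single v]
        · simp [hv]
        · intro v' _ hne
          have : rep v' ≠ j := fun h => hne (hrepinj (h.trans hv.symm))
          simp [this]
        · intro h
          exact absurd (Finset.mem_univ v) h
      refine ⟨Matrix.cramer Gz wz v, Gz.det, hdetz, by rw [hxj, hkval v], ?_, ?_⟩
      · rw [Matrix.cramer_apply]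
        apply hbound
        intro u u'
        rw [Matrix.updateCol_apply]
        split
        · exact hwzb u
        · exact hGzb u u'
      · exact hbound Gz hGzb
    · refine ⟨0, 1, one_ne_zero, ?_, by simp, by
        rw [abs_one]; exact one_le_pow₀ (by norm_num)⟩
      have : x j = 0 := by
        rw [hx]
        apply Finset.sum_eq_zero
        intro v _
        have : rep v ≠ j := fun h => hex ⟨v, h⟩
        simp [this]
      simp [this]

theorem rational_solution_small_bit_complexity (p q : ℕ)
    (A : Matrix (Fin p) (Fin q) ℚ) (b : Fin p → ℚ)
    (hA : ∀ i j, A i j = 0 ∨ A i j = 1) (hb : ∀ i, b i = 0 ∨ b i = 1)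
    (hsol : ∃ x : Fin q → ℝ,
      (A.map (fun c => (c : ℝ))).mulVec x = fun i => ((b i : ℝ))) :
    ∃ x : Fin q → ℚ, A.mulVec x = b ∧
      ∀ j, ∃ num den : ℤ, den ≠ 0 ∧ x j = (num : ℚ) / (den : ℚ) ∧
        |num| ≤ 2 ^ (5 * q ^ 2) ∧ |den| ≤ 2 ^ (5 * q ^ 2) := by
  obtain ⟨x₀, hx₀⟩ := rat_solvable A b hsol
  exact bounded_solution A b hA hb x₀ hx₀
end

section
/- Let t, r ≥ 1, s = 2^t, and n = s·r + s^r + 1. Let H = {h₁, …, h_s} be the set of 𝔽₂-linear functions {0,1}^t → {0,1}. Define f : {0,1}^n → {0,1} as follows: an input is parsed as (g₁, …, g_r, T, b) where each g_j : {0,1}^t → {0,1} is given by its 2^t-bit truth table, T : [s]^r → {0,1} is given by its s^r bits, and b is one bit; set f(g₁,…,g_r,T,b) = T(i₁,…,i_r) if every g_j belongs to H, with g_j = h_{i_j}, and f(g₁,…,g_r,T,b) = b otherwise. Then f is truly n-variate and pdeg(f) ≤ 3·pdeg(AND_{r·s²}) + r + 1. -/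
open scoped Classical

def ANDf (m : ℕ) : (Fin m → Bool) → Bool := fun a => decide (∀ i, a i = true)

/-- `h : {0,1}^t → {0,1}` is `𝔽₂`-linear. -/
def IsLinearBool {t : ℕ} (h : (Fin t → Bool) → Bool) : Prop :=
  ∀ α β : Fin t → Bool, h (fun i => xor (α i) (β i)) = xor (h α) (h β)

/-- The index type of the `n = s·r + s^r + 1` input variables: truth tables of
`g₁,…,g_r` (each `s = 2^t` bits), the table `T : [s]^r → {0,1}`, and the bit `b`. -/
abbrev AdwIndex (t r s : ℕ) : Type :=
  (Fin r × (Fin t → Bool)) ⊕ (Fin r → Fin s) ⊕ Unit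

/-! ### Auxiliary lemmas -/

section Aux
open MvPolynomial

lemma my_totalDegree_aeval_le {σ τ : Type*} (g : σ → MvPolynomial τ ℝ) (k : ℕ)
    (hg : ∀ i, (g i).totalDegree ≤ k) (p : MvPolynomial σ ℝ) :
    (MvPolynomial.aeval g p).totalDegree ≤ k * p.totalDegree := by
  conv_lhs => rw [p.as_sum]
  rw [map_sum]
  refine (totalDegree_finset_sum _ _).trans (Finset.sup_le fun v hv => ?_)
  rw [aeval_monomial]
  refine (totalDegree_mul _ _).trans ?_
  have h1 : (algebraMap ℝ (MvPolynomial τ ℝ) (coeff v p)).totalDegree = 0 :=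
    totalDegree_C _
  rw [h1, zero_add]
  have h2 : (v.prod fun i e => g i ^ e).totalDegree ≤ ∑ i ∈ v.support, v i * k := by
    refine (totalDegree_finset_prod _ _).trans (Finset.sum_le_sum fun i _ => ?_)
    exact (totalDegree_pow _ _).trans (Nat.mul_le_mul_left _ (hg i))
  refine h2.trans ?_
  have h3 : ∑ i ∈ v.support, v i * k = (v.sum fun _ e => e) * k := by
    rw [Finsupp.sum, Finset.sum_mul]
  rw [h3, mul_comm]
  exact Nat.mul_le_mul_left _ (MvPolynomial.le_totalDegree hv)

lemma my_eval_aeval {σ τ : Type*} (x : τ → ℝ) (g : σ → MvPolynomial τ ℝ)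
    (p : MvPolynomial σ ℝ) :
    eval x (aeval g p) = eval (fun i => eval x (g i)) p := by
  rw [aeval_def, eval_eval₂]
  have : ((eval x).comp (algebraMap ℝ (MvPolynomial τ ℝ))) = RingHom.id ℝ := by
    ext r; simp
  rw [this, eval₂_id]

def chiR (b : Bool) : ℝ := if b then -1 else 1

/-- xor with `β` is an equiv of the Boolean cube. -/
def xorEquiv {t : ℕ} (β : Fin t → Bool) : (Fin t → Bool) ≃ (Fin t → Bool) where
  toFun α := fun i => xor (α i) (β i)
  invFun α := fun i => xor (α i) (β i)
  left_inv α := by funext i; simp [Bool.xor_assoc]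
  right_inv α := by funext i; simp [Bool.xor_assoc]

lemma chi_sum_zero {t : ℕ} (d : (Fin t → Bool) → Bool) (hd : IsLinearBool d)
    (β : Fin t → Bool) (hβ : d β = true) :
    ∑ α : Fin t → Bool, chiR (d α) = 0 := by
  have key : ∑ α : Fin t → Bool, chiR (d α)
      = ∑ α : Fin t → Bool, chiR (d ((xorEquiv β) α)) :=
    (Fintype.sum_equiv (xorEquiv β) _ _ (fun α => rfl)).symm
  have h2 : ∀ α, chiR (d ((xorEquiv β) α)) = - chiR (d α) := by
    intro α
    have : d ((xorEquiv β) α) = xor (d α) (d β) := hd α β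
    rw [this, hβ]
    cases d α <;> simp [chiR]
  have h3 : ∑ α : Fin t → Bool, chiR (d ((xorEquiv β) α))
      = - ∑ α : Fin t → Bool, chiR (d α) := by
    rw [← Finset.sum_neg_distrib]
    exact Finset.sum_congr rfl fun α _ => h2 α
  have := key.trans h3
  linarith

lemma xor_linear {t : ℕ} (g h : (Fin t → Bool) → Bool) (hg : IsLinearBool g)
    (hh : IsLinearBool h) : IsLinearBool (fun α => xor (g α) (h α)) := by
  intro α β
  simp only [hg α β, hh α β]
  cases g α <;> cases g β <;> cases h α <;> cases h β <;> rfl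

lemma chi_inner {t : ℕ} (g h : (Fin t → Bool) → Bool) (hg : IsLinearBool g)
    (hh : IsLinearBool h) :
    ∑ α : Fin t → Bool, chiR (g α) * chiR (h α)
      = if g = h then ((2:ℝ) ^ t) else 0 := by
  have hprod : ∀ α, chiR (g α) * chiR (h α) = chiR (xor (g α) (h α)) := by
    intro α; cases g α <;> cases h α <;> simp [chiR]
  simp only [hprod]
  by_cases hgh : g = h
  · subst hgh
    simp only [if_pos rfl, Bool.xor_self]
    simp [chiR, Finset.card_univ]
  · rw [if_neg hgh]
    have : ∃ β, xor (g β) (h β) = true := by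
      by_contra hc
      push_neg at hc
      apply hgh
      funext β
      have := hc β
      cases hgb : g β <;> cases hhb : h β <;> simp_all
    obtain ⟨β, hβ⟩ := this
    exact chi_sum_zero _ (xor_linear g h hg hh) β hβ

lemma linear_zero {t : ℕ} (g : (Fin t → Bool) → Bool) (hg : IsLinearBool g) :
    g (fun _ => false) = false := by
  have := hg (fun _ => false) (fun _ => false)
  simpa using this

/-! ### The construction -/

variable {t r s : ℕ}

/-- the linearity-check bit indexed by `(j, α, β)`. -/
def condBit (a : AdwIndex t r s → Bool) (q : Fin r × (Fin t → Bool) × (Fin t → Bool)) : Bool :=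
  a (Sum.inl (q.1, fun i => xor (q.2.1 i) (q.2.2 i)))
    == xor (a (Sum.inl (q.1, q.2.1))) (a (Sum.inl (q.1, q.2.2)))

/-- degree-3 polynomial computing `condBit` on Boolean inputs. -/
noncomputable def condP (q : Fin r × (Fin t → Bool) × (Fin t → Bool)) :
    MvPolynomial (AdwIndex t r s) ℝ :=
  (1 : MvPolynomial (AdwIndex t r s) ℝ)
    - X (Sum.inl (q.1, fun i => xor (q.2.1 i) (q.2.2 i)))
    - (X (Sum.inl (q.1, q.2.1)) + X (Sum.inl (q.1, q.2.2))
        - 2 * X (Sum.inl (q.1, q.2.1)) * X (Sum.inl (q.1, q.2.2)))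
    + 2 * X (Sum.inl (q.1, fun i => xor (q.2.1 i) (q.2.2 i)))
        * (X (Sum.inl (q.1, q.2.1)) + X (Sum.inl (q.1, q.2.2))
            - 2 * X (Sum.inl (q.1, q.2.1)) * X (Sum.inl (q.1, q.2.2)))

lemma two_deg {σ : Type} : ((2 : MvPolynomial σ ℝ)).totalDegree = 0 := by
  have : ((2 : MvPolynomial σ ℝ)) = C 2 := (map_ofNat (C : ℝ →+* MvPolynomial σ ℝ) 2).symm
  rw [this, totalDegree_C]

lemma condP_deg (q : Fin r × (Fin t → Bool) × (Fin t → Bool)) :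
    (condP (t := t) (r := r) (s := s) q).totalDegree ≤ 3 := by
  set u := X (R := ℝ) (Sum.inl (q.1, fun i => xor (q.2.1 i) (q.2.2 i)) : AdwIndex t r s)
  set v := X (R := ℝ) (Sum.inl (q.1, q.2.1) : AdwIndex t r s)
  set w := X (R := ℝ) (Sum.inl (q.1, q.2.2) : AdwIndex t r s)
  have hu : u.totalDegree ≤ 1 := le_of_eq (totalDegree_X _)
  have hv : v.totalDegree ≤ 1 := le_of_eq (totalDegree_X _)
  have hw : w.totalDegree ≤ 1 := le_of_eq (totalDegree_X _)
  have hq : (v + w - 2 * v * w).totalDegree ≤ 2 := by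
    refine (totalDegree_sub _ _).trans (max_le ((totalDegree_add _ _).trans
      (max_le (hv.trans (by norm_num)) (hw.trans (by norm_num)))) ?_)
    refine (totalDegree_mul _ _).trans ?_
    have : ((2 : MvPolynomial (AdwIndex t r s) ℝ) * v).totalDegree ≤ 1 :=
      (totalDegree_mul _ _).trans (by simpa [two_deg] using hv)
    omega
  show ((1 : MvPolynomial (AdwIndex t r s) ℝ) - u - (v + w - 2*v*w)
      + 2*u*(v + w - 2*v*w)).totalDegree ≤ 3
  refine (totalDegree_add _ _).trans (max_le ?_ ?_)
  · refine (totalDegree_sub _ _).trans (max_le ?_ (hq.trans (by norm_num)))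
    refine (totalDegree_sub _ _).trans (max_le (by simp [totalDegree_one]) (hu.trans (by norm_num)))
  · refine (totalDegree_mul _ _).trans ?_
    have h2u : ((2 : MvPolynomial (AdwIndex t r s) ℝ) * u).totalDegree ≤ 1 :=
      (totalDegree_mul _ _).trans (by simpa [two_deg] using hu)
    omega

lemma condP_eval (a : AdwIndex t r s → Bool) (q : Fin r × (Fin t → Bool) × (Fin t → Bool)) :
    evalBool a (condP q) = if condBit a q then 1 else 0 := by
  simp only [evalBool, condP, map_add, map_sub, map_mul, map_one, eval_X, map_ofNat, condBit]
  rcases Bool.eq_false_or_eq_true (a (Sum.inl (q.1, fun i => xor (q.2.1 i) (q.2.2 i)))) with h1 | h1 <;>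
    rcases Bool.eq_false_or_eq_true (a (Sum.inl (q.1, q.2.1))) with h2 | h2 <;>
    rcases Bool.eq_false_or_eq_true (a (Sum.inl (q.1, q.2.2))) with h3 | h3 <;>
    simp [h1, h2, h3] <;> norm_num

/-- degree-1 polynomial which, on the truth table of a linear `g`, indicates `g = h i`. -/
noncomputable def matchP (h : Fin s → ((Fin t → Bool) → Bool)) (j : Fin r) (i : Fin s) :
    MvPolynomial (AdwIndex t r s) ℝ :=
  C (((2:ℝ) ^ t)⁻¹) *
    ∑ α : Fin t → Bool, C (chiR (h i α)) * (1 - 2 * X (Sum.inl (j, α)))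

lemma matchP_deg (h : Fin s → ((Fin t → Bool) → Bool)) (j : Fin r) (i : Fin s) :
    (matchP h j i).totalDegree ≤ 1 := by
  refine (totalDegree_mul _ _).trans ?_
  rw [totalDegree_C, zero_add]
  refine (totalDegree_finset_sum _ _).trans (Finset.sup_le fun α _ => ?_)
  refine (totalDegree_mul _ _).trans ?_
  rw [totalDegree_C, zero_add]
  refine (totalDegree_sub _ _).trans (max_le (by simp [totalDegree_one]) ?_)
  refine (totalDegree_mul _ _).trans ?_
  rw [two_deg, zero_add]
  exact le_of_eq (totalDegree_X _)

lemma sign_eval (a : AdwIndex t r s → Bool) (v : AdwIndex t r s) :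
    MvPolynomial.eval (fun i => if a i then (1:ℝ) else 0)
      ((1 : MvPolynomial (AdwIndex t r s) ℝ) - 2 * X v) = chiR (a v) := by
  simp only [map_sub, map_mul, map_one, eval_X, map_ofNat]
  cases h : a v <;> simp [h, chiR] <;> norm_num

lemma matchP_eval (a : AdwIndex t r s → Bool) (h : Fin s → ((Fin t → Bool) → Bool))
    (j : Fin r) (i : Fin s)
    (hga : IsLinearBool (fun α => a (Sum.inl (j, α)))) (hhi : IsLinearBool (h i)) :
    evalBool a (matchP h j i)
      = if h i = (fun α => a (Sum.inl (j, α))) then 1 else 0 := by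
  have h2t : ((2:ℝ) ^ t) ≠ 0 := by positivity
  simp only [evalBool, matchP, map_mul, eval_C, map_sum, sign_eval]
  rw [chi_inner (h i) (fun α => a (Sum.inl (j, α))) hhi hga]
  by_cases heq : h i = (fun α => a (Sum.inl (j, α)))
  · rw [if_pos heq, if_pos heq, inv_mul_cancel₀ h2t]
  · rw [if_neg heq, if_neg heq, mul_zero]

/-- the selector polynomial, of degree ≤ r + 1. -/
noncomputable def selP (h : Fin s → ((Fin t → Bool) → Bool)) :
    MvPolynomial (AdwIndex t r s) ℝ :=
  ∑ idx : Fin r → Fin s, X (Sum.inr (Sum.inl idx)) * ∏ j, matchP h j (idx j)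

lemma selP_deg (h : Fin s → ((Fin t → Bool) → Bool)) :
    (selP (t := t) (r := r) h).totalDegree ≤ r + 1 := by
  refine (totalDegree_finset_sum _ _).trans (Finset.sup_le fun idx _ => ?_)
  refine (totalDegree_mul _ _).trans ?_
  have h1 : (X (R := ℝ) (Sum.inr (Sum.inl idx) : AdwIndex t r s)).totalDegree ≤ 1 :=
    le_of_eq (totalDegree_X _)
  have h2 : (∏ j, matchP (t := t) h j (idx j)).totalDegree ≤ r := by
    refine (totalDegree_finset_prod _ _).trans ?_
    calc ∑ j : Fin r, (matchP (t := t) h j (idx j)).totalDegree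
        ≤ ∑ _j : Fin r, 1 := Finset.sum_le_sum fun j _ => matchP_deg h j (idx j)
      _ = r := by simp
  omega

lemma selP_eval (a : AdwIndex t r s → Bool) (h : Fin s → ((Fin t → Bool) → Bool))
    (hinj : Function.Injective h) (hlin : ∀ i, IsLinearBool (h i))
    (IDX : Fin r → Fin s)
    (hIDX : ∀ (j : Fin r) (α : Fin t → Bool), a (Sum.inl (j, α)) = h (IDX j) α) :
    evalBool a (selP h) = if a (Sum.inr (Sum.inl IDX)) then 1 else 0 := by
  have hg : ∀ j : Fin r, (fun α => a (Sum.inl (j, α))) = h (IDX j) := fun j =>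
    funext fun α => hIDX j α
  have hterm : ∀ idx : Fin r → Fin s,
      evalBool a (X (Sum.inr (Sum.inl idx)) * ∏ j, matchP h j (idx j))
      = (if a (Sum.inr (Sum.inl idx)) then (1:ℝ) else 0) *
          (if idx = IDX then 1 else 0) := by
    intro idx
    have hmat : ∀ j : Fin r, evalBool a (matchP h j (idx j))
        = if idx j = IDX j then (1:ℝ) else 0 := by
      intro j
      rw [matchP_eval a h j (idx j) (by rw [hg j]; exact hlin (IDX j)) (hlin (idx j))]
      rw [hg j]
      by_cases hj : idx j = IDX j
      · rw [if_pos (by rw [hj]), if_pos hj]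
      · rw [if_neg (fun hc => hj (hinj hc)), if_neg hj]
    have hprod : evalBool a (∏ j, matchP h j (idx j))
        = if idx = IDX then (1:ℝ) else 0 := by
      rw [evalBool, map_prod]
      by_cases hidx : idx = IDX
      · rw [if_pos hidx]
        refine Finset.prod_eq_one fun j _ => ?_
        rw [show MvPolynomial.eval (fun i => if a i then (1:ℝ) else 0) (matchP h j (idx j))
            = evalBool a (matchP h j (idx j)) from rfl, hmat j, if_pos (by rw [hidx])]
      · rw [if_neg hidx]
        obtain ⟨j, hj⟩ : ∃ j, idx j ≠ IDX j := by
          by_contra hc; push_neg at hc; exact hidx (funext hc)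
        refine Finset.prod_eq_zero (Finset.mem_univ j) ?_
        rw [show MvPolynomial.eval (fun i => if a i then (1:ℝ) else 0) (matchP h j (idx j))
            = evalBool a (matchP h j (idx j)) from rfl, hmat j, if_neg hj]
    rw [evalBool, map_mul, MvPolynomial.eval_X]
    rw [show MvPolynomial.eval (fun i => if a i then (1:ℝ) else 0) (∏ j, matchP h j (idx j))
        = evalBool a (∏ j, matchP h j (idx j)) from rfl, hprod]
  rw [evalBool, selP, map_sum]
  rw [Finset.sum_congr rfl fun idx _ =>
    (show MvPolynomial.eval (fun i => if a i then (1:ℝ) else 0)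
        (X (Sum.inr (Sum.inl idx)) * ∏ j, matchP h j (idx j))
      = evalBool a (X (Sum.inr (Sum.inl idx)) * ∏ j, matchP h j (idx j)) from rfl).trans
      (hterm idx)]
  simp only [mul_ite, mul_one, mul_zero]
  rw [Finset.sum_ite_eq' Finset.univ IDX (fun idx => if a (Sum.inr (Sum.inl idx)) then (1:ℝ) else 0)]
  simp

/-- A trivial exact polynomial for AND. -/
lemma and_has (m : ℕ) : HasProbPoly (ANDf m) (1/3) m := by
  refine ⟨1, fun _ => 1, fun _ => ∏ i, MvPolynomial.X i, fun _ => zero_le_one, by simp, ?_, ?_⟩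
  · intro i
    refine (MvPolynomial.totalDegree_finset_prod _ _).trans ?_
    calc ∑ j : Fin m, (MvPolynomial.X (R := ℝ) j).totalDegree
        ≤ ∑ _j : Fin m, 1 := Finset.sum_le_sum fun j _ => le_of_eq (MvPolynomial.totalDegree_X _)
      _ = m := by simp
  · intro a
    have : evalBool a (∏ i, MvPolynomial.X i) = (if ANDf m a then (1:ℝ) else 0) := by
      rw [evalBool, map_prod]
      simp only [MvPolynomial.eval_X]
      by_cases hall : ∀ i, a i = true
      · rw [show ANDf m a = true by simp [ANDf, hall], if_pos rfl]
        exact Finset.prod_eq_one fun i _ => by rw [hall i, if_pos rfl]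
      · push_neg at hall
        obtain ⟨i, hi⟩ := hall
        have hAND : ANDf m a = false := by
          simp only [ANDf, decide_eq_false_iff_not]
          intro hc; exact hi (hc i)
        rw [hAND, if_neg (by simp)]
        have hi' : a i = false := by simpa using hi
        exact Finset.prod_eq_zero (Finset.mem_univ i) (by simp [hi'])
    simp only [this, ne_eq, not_true_eq_false, Finset.filter_false]
    norm_num

end Aux
theorem encoded_addressing_function (t r : ℕ) (ht : 1 ≤ t) (hr : 1 ≤ r)
    (s : ℕ) (hs : s = 2 ^ t)
    (h : Fin s → ((Fin t → Bool) → Bool))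
    (hinj : Function.Injective h)
    (hlin : ∀ i, IsLinearBool (h i))
    (hall : ∀ g : (Fin t → Bool) → Bool, IsLinearBool g → ∃ i, g = h i)
    (f : (AdwIndex t r s → Bool) → Bool)
    (hf1 : ∀ (x : AdwIndex t r s → Bool) (idx : Fin r → Fin s),
      (∀ (j : Fin r) (α : Fin t → Bool), x (Sum.inl (j, α)) = h (idx j) α) →
      f x = x (Sum.inr (Sum.inl idx)))
    (hf2 : ∀ x : AdwIndex t r s → Bool,
      (¬ ∀ j : Fin r, ∃ i : Fin s, ∀ α : Fin t → Bool, x (Sum.inl (j, α)) = h i α) →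
      f x = x (Sum.inr (Sum.inr ()))) :
    TrulyVariate f ∧
      pdeg (1/3) f ≤ 3 * pdeg (1/3) (ANDf (r * s ^ 2)) + r + 1 := by
  obtain ⟨i₀, hi₀⟩ := hall (fun _ => false) (fun α β => rfl)
  constructor
  · -- Truly variate
    intro v
    rcases v with ⟨j₀, α₀⟩ | (idx | u)
    · -- a `g` coordinate
      set a : AdwIndex t r s → Bool := fun w =>
        match w with
        | Sum.inl (_, α) => h i₀ α
        | Sum.inr (Sum.inl idx') => decide (idx' = fun _ => i₀)
        | Sum.inr (Sum.inr _) => false with ha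
      have hfa : f a = true := by
        rw [hf1 a (fun _ => i₀) (fun j α => rfl)]
        simp [ha]
      have main : ∀ b : AdwIndex t r s → Bool,
          b (Sum.inl (j₀, α₀)) = (!(a (Sum.inl (j₀, α₀)))) →
          (∀ w, w ≠ Sum.inl (j₀, α₀) → b w = a w) → f b ≠ f a := by
        intro b hb hbw
        have hbval : b (Sum.inl (j₀, α₀)) = !(h i₀ α₀) := hb
        have hfb : f b = false := by
          by_cases hcase : ∃ i : Fin s, ∀ α, b (Sum.inl (j₀, α)) = h i α
          · obtain ⟨i₁, hi₁⟩ := hcase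
            have hne : i₁ ≠ i₀ := by
              intro hc
              have h2 := hi₁ α₀
              rw [hbval, hc] at h2
              exact Bool.not_ne_self _ h2
            have hx : ∀ (j : Fin r) (α : Fin t → Bool),
                b (Sum.inl (j, α)) = h (if j = j₀ then i₁ else i₀) α := by
              intro j α
              by_cases hj : j = j₀
              · subst hj
                rw [if_pos rfl]
                exact hi₁ α
              · rw [if_neg hj, hbw _ (by simp [hj])]
            rw [hf1 b _ hx, hbw _ (by simp)]
            have hnef : (fun j : Fin r => if j = j₀ then i₁ else i₀) ≠ (fun _ => i₀) := by
              intro hc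
              have h3 := congrFun hc j₀
              simp only [if_pos rfl] at h3
              exact hne h3
            simp [ha, hnef]
          · rw [hf2 b (fun hforall => hcase (hforall j₀)), hbw _ (by simp)]
        rw [hfb, hfa]
        simp
      refine ⟨a, main _ ?_ ?_⟩
      · exact @Function.update_self _ _ (fun a b => Classical.propDecidable (a = b)) _ _ _
      · intro w hw
        exact @Function.update_of_ne _ _ (fun a b => Classical.propDecidable (a = b)) _ _ hw _ _
    · -- a `T` coordinate
      set a : AdwIndex t r s → Bool := fun w =>
        match w with
        | Sum.inl (j, α) => h (idx j) α
        | Sum.inr _ => false with ha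
      have hfa : f a = false := by
        rw [hf1 a idx (fun j α => rfl)]
      have main : ∀ b : AdwIndex t r s → Bool,
          b (Sum.inr (Sum.inl idx)) = (!(a (Sum.inr (Sum.inl idx)))) →
          (∀ w, w ≠ Sum.inr (Sum.inl idx) → b w = a w) → f b ≠ f a := by
        intro b hb hbw
        have hfb : f b = true := by
          rw [hf1 b idx (fun j α => hbw _ (by simp)), hb]
          simp [ha]
        rw [hfb, hfa]
        simp
      refine ⟨a, main _ ?_ ?_⟩
      · exact @Function.update_self _ _ (fun a b => Classical.propDecidable (a = b)) _ _ _
      · intro w hw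
        exact @Function.update_of_ne _ _ (fun a b => Classical.propDecidable (a = b)) _ _ hw _ _
    · -- the `b` coordinate
      obtain ⟨⟩ := u
      set a : AdwIndex t r s → Bool := fun w =>
        match w with
        | Sum.inl _ => true
        | Sum.inr _ => false with ha
      have hnl : ∀ x : AdwIndex t r s → Bool, (∀ j α, x (Sum.inl (j, α)) = true) →
          ¬ ∀ j : Fin r, ∃ i : Fin s, ∀ α : Fin t → Bool, x (Sum.inl (j, α)) = h i α := by
        intro x hx hforall
        obtain ⟨i, hi⟩ := hforall ⟨0, hr⟩
        have h1 : h i (fun _ => false) = true := by rw [← hi]; exact hx _ _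
        have h2 : h i (fun _ => false) = false := linear_zero (h i) (hlin i)
        rw [h1] at h2
        simp at h2
      have hfa : f a = false := by
        rw [hf2 a (hnl a (fun j α => rfl))]
      have main : ∀ b : AdwIndex t r s → Bool,
          b (Sum.inr (Sum.inr ())) = (!(a (Sum.inr (Sum.inr ())))) →
          (∀ w, w ≠ Sum.inr (Sum.inr ()) → b w = a w) → f b ≠ f a := by
        intro b hb hbw
        have hfb : f b = true := by
          rw [hf2 b (hnl b (fun j α => hbw _ (by simp))), hb]
          simp [ha]
        rw [hfb, hfa]
        simp
      refine ⟨a, main _ ?_ ?_⟩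
      · exact @Function.update_self _ _ (fun a b => Classical.propDecidable (a = b)) _ _ _
      · intro w hw
        exact @Function.update_of_ne _ _ (fun a b => Classical.propDecidable (a = b)) _ _ hw _ _
  · -- pdeg bound
    have hft : Fintype.card (Fin t → Bool) = 2 ^ t := by simp
    have hcard : Fintype.card (Fin r × (Fin t → Bool) × (Fin t → Bool)) = r * s ^ 2 := by
      rw [Fintype.card_prod, Fintype.card_prod, Fintype.card_fin, hft, hs]
      ring
    set m := r * s ^ 2 with hm
    let e : Fin m ≃ (Fin r × (Fin t → Bool) × (Fin t → Bool)) :=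
      (Fintype.equivFinOfCardEq hcard).symm
    have hne : Set.Nonempty {d | HasProbPoly (ANDf m) (1/3) d} := ⟨m, by exact and_has m⟩
    have hDmem : HasProbPoly (ANDf m) (1/3) (pdeg (1/3) (ANDf m)) := Nat.sInf_mem hne
    set D := pdeg (1/3) (ANDf m) with hD
    obtain ⟨k, w, P, hw0, hw1, hdeg, herr⟩ := hDmem
    set E : Fin k → MvPolynomial (AdwIndex t r s) ℝ :=
      fun i => MvPolynomial.aeval (fun κ => condP (t := t) (r := r) (s := s) (e κ)) (P i)
      with hE
    set Q : Fin k → MvPolynomial (AdwIndex t r s) ℝ :=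
      fun i => E i * selP h + (1 - E i) * MvPolynomial.X (Sum.inr (Sum.inr ()))
      with hQ
    have hEdeg : ∀ i, (E i).totalDegree ≤ 3 * D := fun i =>
      (my_totalDegree_aeval_le _ 3 (fun κ => condP_deg (e κ)) (P i)).trans
        (Nat.mul_le_mul_left 3 (hdeg i))
    have hQdeg : ∀ i, (Q i).totalDegree ≤ 3 * D + r + 1 := by
      intro i
      have h1 : (E i * selP h).totalDegree ≤ 3 * D + (r + 1) :=
        (MvPolynomial.totalDegree_mul _ _).trans (add_le_add (hEdeg i) (selP_deg h))
      have h2 : ((1 - E i) * MvPolynomial.X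
          (Sum.inr (Sum.inr ()) : AdwIndex t r s)).totalDegree ≤ 3 * D + 1 := by
        refine (MvPolynomial.totalDegree_mul _ _).trans ?_
        have h3 : ((1 : MvPolynomial (AdwIndex t r s) ℝ) - E i).totalDegree ≤ 3 * D :=
          (MvPolynomial.totalDegree_sub _ _).trans
            (max_le (by simp [MvPolynomial.totalDegree_one]) (hEdeg i))
        have h4 := MvPolynomial.totalDegree_X (R := ℝ)
          (Sum.inr (Sum.inr ()) : AdwIndex t r s)
        omega
      refine (MvPolynomial.totalDegree_add _ _).trans (max_le (by omega) (by omega))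
    rw [show pdeg (1/3) f = sInf {d | HasProbPoly f (1/3) d} from rfl]
    refine Nat.sInf_le (show HasProbPoly f (1/3) (3 * D + r + 1) from
      ⟨k, w, Q, hw0, hw1, hQdeg, ?_⟩)
    intro a
    set ca : Fin m → Bool := fun κ => condBit a (e κ) with hca
    have hEeval : ∀ i, evalBool a (E i) = evalBool ca (P i) := by
      intro i
      show MvPolynomial.eval (fun i => if a i then (1:ℝ) else 0)
        (MvPolynomial.aeval (fun κ => condP (e κ)) (P i)) = _
      rw [my_eval_aeval]
      have hfn : (fun κ => MvPolynomial.eval (fun i => if a i then (1:ℝ) else 0)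
          (condP (e κ))) = fun κ => if ca κ then (1:ℝ) else 0 :=
        funext fun κ => condP_eval a (e κ)
      rw [hfn]
      rfl
    have hAndIff : ANDf m ca = true ↔
        ∀ j : Fin r, IsLinearBool (fun α => a (Sum.inl (j, α))) := by
      rw [show ANDf m ca = decide (∀ κ, ca κ = true) from rfl, decide_eq_true_eq]
      constructor
      · intro H j α β
        have h5 := H (e.symm (j, α, β))
        rw [hca] at h5
        simp only [Equiv.apply_symm_apply] at h5
        exact beq_iff_eq.mp h5
      · intro H κ
        show condBit a (e κ) = true
        exact beq_iff_eq.mpr (H (e κ).1 (e κ).2.1 (e κ).2.2)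
    have hLinIff : (∀ j : Fin r, IsLinearBool (fun α => a (Sum.inl (j, α)))) ↔
        (∀ j : Fin r, ∃ i : Fin s, ∀ α : Fin t → Bool, a (Sum.inl (j, α)) = h i α) := by
      constructor
      · intro H j
        obtain ⟨i, hi⟩ := hall _ (H j)
        exact ⟨i, fun α => congrFun hi α⟩
      · intro H j
        obtain ⟨i, hi⟩ := H j
        have hgi : (fun α => a (Sum.inl (j, α))) = h i := funext hi
        rw [hgi]
        exact hlin i
    have hgood : ∀ i, evalBool ca (P i) = (if ANDf m ca then (1:ℝ) else 0) →
        evalBool a (Q i) = (if f a then (1:ℝ) else 0) := by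
      intro i hgi
      have hQe : evalBool a (Q i)
          = evalBool a (E i) * evalBool a (selP h)
            + (1 - evalBool a (E i)) *
              (if a (Sum.inr (Sum.inr ())) then (1:ℝ) else 0) := by
        rw [hQ]
        simp only [evalBool, map_add, map_mul, map_sub, map_one, MvPolynomial.eval_X]
      rw [hQe, hEeval i, hgi]
      by_cases hAND : ANDf m ca = true
      · rw [if_pos hAND]
        have hex := hLinIff.mp (hAndIff.mp hAND)
        choose IDX hIDX using hex
        rw [selP_eval a h hinj hlin IDX hIDX, hf1 a IDX hIDX]
        ring
      · rw [if_neg hAND]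
        rw [hf2 a (fun hforall => hAND (hAndIff.mpr (hLinIff.mpr hforall)))]
        ring
    refine le_trans (Finset.sum_le_sum_of_subset_of_nonneg ?_ (fun i _ _ => hw0 i))
      (herr ca)
    intro i hi
    rw [Finset.mem_filter] at hi ⊢
    exact ⟨hi.1, fun hc => hi.2 (hgood i hc)⟩
end
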